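/- arXiv:1504.04060 — 7 statements merged into one kernel-verified Lean document; each statement's English description precedes it below -/
import Mathlib

section
/- Let μ > 0 and p₁, …, p_N ∈ ℝ². Then the background function u₀'(x) = −Σ_{j=1}^{N} ln(1 + μ·|x − p_j|⁻²) (defined off the finitely many points p_j) belongs to L²(ℝ²), and the function g₀'(x) = Σ_{j=1}^{N} 4μ/(μ + |x − p_j|²)² belongs to L²(ℝ²). -/
open MeasureTheory
open Metric Set

local notation "E2" => EuclideanSpace ℝ (Fin 2)

lemma integrableOn_rpow_ball (p : E2) :
    IntegrableOn (fun x : E2 => ‖x - p‖ ^ (-(1/2) : ℝ)) (ball p 1) volume := by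
  have hmeas : Measurable (fun x : E2 => ‖x - p‖ ^ (-(1/2) : ℝ)) := by fun_prop
  have h0 : ∀ x : E2, 0 ≤ ‖x - p‖ ^ (-(1/2) : ℝ) := fun x => Real.rpow_nonneg (norm_nonneg _) _
  refine ⟨(hmeas.aestronglyMeasurable).restrict, ?_⟩
  rw [hasFiniteIntegral_iff_ofReal (ae_of_all _ h0)]
  set ν := volume.restrict (ball p 1) with hν
  rw [lintegral_eq_lintegral_meas_le ν (ae_of_all _ h0) hmeas.aemeasurable]
  set B := volume (ball (0:E2) 1) with hB
  have hBfin : B < ⊤ := measure_ball_lt_top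
  have hsub : ∀ t : ℝ, 0 < t → {a : E2 | t ≤ ‖a - p‖ ^ (-(1/2) : ℝ)} ⊆ closedBall p (t ^ (-2 : ℝ)) := by
    intro t ht a ha
    simp only [mem_setOf_eq] at ha
    have hr : (0:ℝ) < ‖a - p‖ := by
      rcases eq_or_lt_of_le (norm_nonneg (a - p)) with h | h
      · exfalso
        rw [← h, Real.zero_rpow (by norm_num)] at ha
        linarith
      · exact h
    have : (‖a - p‖ ^ (-(1/2) : ℝ)) ^ (-2 : ℝ) ≤ t ^ (-2 : ℝ) :=
      Real.rpow_le_rpow_of_nonpos ht ha (by norm_num)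
    rw [mem_closedBall, dist_eq_norm]
    calc ‖a - p‖ = (‖a - p‖ ^ (-(1/2) : ℝ)) ^ (-2 : ℝ) := by
          rw [← Real.rpow_mul hr.le]; norm_num
      _ ≤ t ^ (-2 : ℝ) := this
  calc ∫⁻ t in Ioi (0:ℝ), ν {a | t ≤ ‖a - p‖ ^ (-(1/2) : ℝ)}
      ≤ ∫⁻ t in Ioc (0:ℝ) 1 ∪ Ioi 1, ν {a | t ≤ ‖a - p‖ ^ (-(1/2) : ℝ)} :=
        lintegral_mono_set Ioi_subset_Ioc_union_Ioi
    _ ≤ (∫⁻ t in Ioc (0:ℝ) 1, ν {a | t ≤ ‖a - p‖ ^ (-(1/2) : ℝ)}) +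
        ∫⁻ t in Ioi (1:ℝ), ν {a | t ≤ ‖a - p‖ ^ (-(1/2) : ℝ)} := lintegral_union_le _ _ _
    _ < ⊤ := by
        refine ENNReal.add_lt_top.2 ⟨?_, ?_⟩
        · calc ∫⁻ t in Ioc (0:ℝ) 1, ν {a | t ≤ ‖a - p‖ ^ (-(1/2) : ℝ)}
              ≤ ∫⁻ _ in Ioc (0:ℝ) 1, B := by
                refine lintegral_mono fun t => ?_
                calc ν {a | t ≤ ‖a - p‖ ^ (-(1/2) : ℝ)} ≤ ν univ := measure_mono (subset_univ _)
                  _ ≤ volume (ball p 1) := by rw [hν, Measure.restrict_apply_univ]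
                  _ = B := by rw [hB, Measure.addHaar_ball_center]
            _ = B * volume (Ioc (0:ℝ) 1) := by rw [lintegral_const, Measure.restrict_apply_univ]
            _ < ⊤ := by
                apply ENNReal.mul_lt_top hBfin
                simp [Real.volume_Ioc]
        · calc ∫⁻ t in Ioi (1:ℝ), ν {a | t ≤ ‖a - p‖ ^ (-(1/2) : ℝ)}
              ≤ ∫⁻ t in Ioi (1:ℝ), ENNReal.ofReal (t ^ (-4 : ℝ)) * B := by
                refine setLIntegral_mono' measurableSet_Ioi fun t ht => ?_
                have ht' : (0:ℝ) < t := lt_trans one_pos ht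
                calc ν {a | t ≤ ‖a - p‖ ^ (-(1/2) : ℝ)}
                    ≤ volume (closedBall p (t ^ (-2 : ℝ))) :=
                      le_trans (measure_mono (hsub t ht')) (Measure.restrict_le_self _)
                  _ = ENNReal.ofReal ((t ^ (-2:ℝ)) ^ Module.finrank ℝ E2) * B :=
                      Measure.addHaar_closedBall volume p (Real.rpow_nonneg ht'.le _)
                  _ = ENNReal.ofReal (t ^ (-4 : ℝ)) * B := by
                      rw [finrank_euclideanSpace_fin, ← Real.rpow_natCast (t ^ (-2:ℝ)) 2,
                        ← Real.rpow_mul ht'.le]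
                      norm_num
            _ = (∫⁻ t in Ioi (1:ℝ), ENNReal.ofReal (t ^ (-4 : ℝ))) * B :=
                lintegral_mul_const' B _ hBfin.ne
            _ < ⊤ := ENNReal.mul_lt_top
                (integrableOn_Ioi_rpow_of_lt (by norm_num) one_pos).setLIntegral_lt_top hBfin

lemma finrank_E2 : (Module.finrank ℝ (EuclideanSpace ℝ (Fin 2)) : ℝ) = 2 := by
  rw [finrank_euclideanSpace_fin]; norm_num

lemma integrable_shift (p : E2) {r : ℝ} (hr : (2:ℝ) < r) :
    Integrable (fun x : E2 => (1 + ‖x - p‖) ^ (-r)) volume := by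
  have := integrable_one_add_norm (E := E2) (μ := volume) (r := r) (by rw [finrank_E2]; exact hr)
  exact this.comp_sub_right p

lemma memL2_g (μ : ℝ) (hμ : 0 < μ) (p : E2) :
    MemLp (fun x : E2 => 4 * μ / (μ + ‖x - p‖ ^ 2) ^ 2) 2 volume := by
  have hden : ∀ x : E2, 0 < μ + ‖x - p‖ ^ 2 := fun x => by positivity
  have hcont : Continuous (fun x : E2 => 4 * μ / (μ + ‖x - p‖ ^ 2) ^ 2) := by
    apply continuous_const.div (by continuity)
    intro x
    exact pow_ne_zero _ (hden x).ne'
  rw [memLp_two_iff_integrable_sq hcont.aestronglyMeasurable]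
  set c : ℝ := min μ 1 with hc
  have hc0 : 0 < c := lt_min hμ one_pos
  refine ((integrable_shift p (by norm_num : (2:ℝ) < 8)).const_mul
    (256 * μ ^ 2 / c ^ 4)).mono' ?_ ?_
  · exact ((hcont.pow 2).aestronglyMeasurable)
  · refine ae_of_all _ fun x => ?_
    set r : ℝ := ‖x - p‖ with hrdef
    have hr0 : 0 ≤ r := norm_nonneg _
    have h1r : (0:ℝ) < 1 + r := by linarith
    have key : c * (1 + r) ^ 2 ≤ 2 * (μ + r ^ 2) := by
      have h1 : c ≤ μ := min_le_left _ _
      have h2 : c ≤ 1 := min_le_right _ _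
      nlinarith [sq_nonneg (r - 1), sq_nonneg r]
    have hpow : (c * (1 + r) ^ 2) ^ 4 ≤ (2 * (μ + r ^ 2)) ^ 4 :=
      pow_le_pow_left₀ (by positivity) key 4
    have hrpow : (1 + r) ^ (-(8:ℝ)) = ((1 + r) ^ (8:ℕ))⁻¹ := by
      rw [← Real.rpow_natCast (1 + r) 8, ← Real.rpow_neg h1r.le]
      norm_num
    rw [Real.norm_eq_abs, abs_of_nonneg (by positivity)]
    rw [div_pow, hrpow]
    have h2 : c ^ 4 * (1 + r) ^ 8 ≤ 16 * (μ + r ^ 2) ^ 4 := by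
      calc c ^ 4 * (1 + r) ^ 8 = (c * (1 + r) ^ 2) ^ 4 := by ring
        _ ≤ (2 * (μ + r ^ 2)) ^ 4 := hpow
        _ = 16 * (μ + r ^ 2) ^ 4 := by ring
    rw [← div_eq_mul_inv, le_div_iff₀ (by positivity : (0:ℝ) < (1 + r) ^ (8:ℕ)),
      div_mul_eq_mul_div,
      div_le_div_iff₀ (by positivity) (by positivity : (0:ℝ) < c ^ 4)]
    calc (4 * μ) ^ 2 * (1 + r) ^ (8:ℕ) * c ^ 4 = 16 * μ ^ 2 * (c ^ 4 * (1 + r) ^ 8) := by ring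
      _ ≤ 16 * μ ^ 2 * (16 * (μ + r ^ 2) ^ 4) :=
          mul_le_mul_of_nonneg_left h2 (by positivity)
      _ = 256 * μ ^ 2 * ((μ + r ^ 2) ^ 2) ^ 2 := by ring

lemma memL2_log (μ : ℝ) (hμ : 0 < μ) (p : E2) :
    MemLp (fun x : E2 => Real.log (1 + μ * (‖x - p‖ ^ 2)⁻¹)) 2 volume := by
  have hmeas : Measurable (fun x : E2 => Real.log (1 + μ * (‖x - p‖ ^ 2)⁻¹)) := by measurability
  rw [memLp_two_iff_integrable_sq hmeas.aestronglyMeasurable]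
  have hsq : Measurable (fun x : E2 => (Real.log (1 + μ * (‖x - p‖ ^ 2)⁻¹)) ^ 2) :=
    hmeas.pow_const 2
  rw [← integrableOn_univ, ← union_compl_self (ball p 1)]
  refine IntegrableOn.union ?_ ?_
  · -- on the ball
    refine Integrable.mono' ((integrableOn_rpow_ball p).const_mul (64 * (1 + μ) ^ ((1:ℝ)/4)))
      hsq.aestronglyMeasurable.restrict ?_
    rw [ae_restrict_iff' measurableSet_ball]
    refine ae_of_all _ fun x hx => ?_
    rcases eq_or_lt_of_le (norm_nonneg (x - p)) with h0 | hr
    · rw [Real.norm_eq_abs, ← h0]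
      simp [Real.zero_rpow (by norm_num : -(1/2 : ℝ) ≠ 0)]
    · set r : ℝ := ‖x - p‖ with hrdef
      have hr1 : r < 1 := by rwa [mem_ball, dist_eq_norm] at hx
      have hinv1 : (1:ℝ) ≤ (r ^ 2)⁻¹ := by
        rw [one_le_inv_iff₀]
        exact ⟨by positivity, by nlinarith⟩
      have harg : (0:ℝ) < 1 + μ * (r ^ 2)⁻¹ := by positivity
      have hlog0 : 0 ≤ Real.log (1 + μ * (r ^ 2)⁻¹) := Real.log_nonneg (by nlinarith)
      have hL : Real.log (1 + μ * (r ^ 2)⁻¹) ≤ 8 * ((1 + μ) * (r ^ 2)⁻¹) ^ ((1:ℝ)/8) := by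
        calc Real.log (1 + μ * (r ^ 2)⁻¹)
            ≤ (1 + μ * (r ^ 2)⁻¹) ^ ((1:ℝ)/8) / (1/8) :=
              Real.log_le_rpow_div harg.le (by norm_num)
          _ = 8 * (1 + μ * (r ^ 2)⁻¹) ^ ((1:ℝ)/8) := by ring
          _ ≤ 8 * ((1 + μ) * (r ^ 2)⁻¹) ^ ((1:ℝ)/8) := by
              have : 1 + μ * (r ^ 2)⁻¹ ≤ (1 + μ) * (r ^ 2)⁻¹ := by nlinarith
              gcongr
      rw [Real.norm_eq_abs, abs_of_nonneg (sq_nonneg _)]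
      have hkey : ((r ^ 2)⁻¹ : ℝ) ^ ((1:ℝ)/4) = r ^ (-(1/2) : ℝ) := by
        rw [← Real.rpow_natCast r 2, ← Real.rpow_neg hr.le, ← Real.rpow_mul hr.le]
        norm_num
      calc (Real.log (1 + μ * (r ^ 2)⁻¹)) ^ 2
          ≤ (8 * ((1 + μ) * (r ^ 2)⁻¹) ^ ((1:ℝ)/8)) ^ 2 := pow_le_pow_left₀ hlog0 hL 2
        _ = 64 * (((1 + μ) * (r ^ 2)⁻¹) ^ ((1:ℝ)/8)) ^ (2:ℕ) := by ring
        _ = 64 * ((1 + μ) * (r ^ 2)⁻¹) ^ ((1:ℝ)/4) := by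
            rw [← Real.rpow_natCast (((1 + μ) * (r ^ 2)⁻¹) ^ ((1:ℝ)/8)) 2,
              ← Real.rpow_mul (by positivity)]
            norm_num
        _ = 64 * ((1 + μ) ^ ((1:ℝ)/4) * ((r ^ 2)⁻¹) ^ ((1:ℝ)/4)) := by
            rw [Real.mul_rpow (by positivity) (by positivity)]
        _ = 64 * (1 + μ) ^ ((1:ℝ)/4) * r ^ (-(1/2) : ℝ) := by rw [hkey]; ring
  · -- off the ball
    refine Integrable.mono'
      (((integrable_shift p (by norm_num : (2:ℝ) < 4)).const_mul (16 * μ ^ 2)).integrableOn)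
      hsq.aestronglyMeasurable.restrict ?_
    rw [ae_restrict_iff' measurableSet_ball.compl]
    refine ae_of_all _ fun x hx => ?_
    set r : ℝ := ‖x - p‖ with hrdef
    have hr1 : 1 ≤ r := by
      simp only [mem_compl_iff, mem_ball, dist_eq_norm, not_lt] at hx
      exact hx
    have hr0 : (0:ℝ) < r := lt_of_lt_of_le one_pos hr1
    have harg : (0:ℝ) < 1 + μ * (r ^ 2)⁻¹ := by positivity
    have hlog0 : 0 ≤ Real.log (1 + μ * (r ^ 2)⁻¹) := Real.log_nonneg (by
      have : (0:ℝ) ≤ μ * (r ^ 2)⁻¹ := by positivity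
      linarith)
    have hL : Real.log (1 + μ * (r ^ 2)⁻¹) ≤ μ * (r ^ 2)⁻¹ := by
      have := Real.log_le_sub_one_of_pos harg
      linarith
    rw [Real.norm_eq_abs, abs_of_nonneg (sq_nonneg _)]
    have hrpow : (1 + r) ^ (-(4:ℝ)) = ((1 + r) ^ (4:ℕ))⁻¹ := by
      rw [← Real.rpow_natCast (1 + r) 4, ← Real.rpow_neg (by linarith)]
      norm_num
    rw [hrpow]
    calc (Real.log (1 + μ * (r ^ 2)⁻¹)) ^ 2
        ≤ (μ * (r ^ 2)⁻¹) ^ 2 := pow_le_pow_left₀ hlog0 hL 2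
      _ ≤ 16 * μ ^ 2 * ((1 + r) ^ (4:ℕ))⁻¹ := by
          rw [mul_pow, inv_pow, ← div_eq_mul_inv, ← div_eq_mul_inv,
            div_le_div_iff₀ (by positivity) (by positivity)]
          have h2 : (1 + r) ^ (4:ℕ) ≤ 16 * (r ^ 2) ^ 2 := by nlinarith [sq_nonneg (r - 1)]
          nlinarith [mul_le_mul_of_nonneg_left h2 (sq_nonneg μ)]

/-- For `μ > 0` and points `p₁, …, p_N ∈ ℝ²`, the background function
`u₀'(x) = −Σ_j ln(1 + μ|x−p_j|⁻²)` and the regularized source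
`g₀'(x) = Σ_j 4μ/(μ+|x−p_j|²)²` both belong to `L²(ℝ²)`. -/
theorem background_functions_mem_L2 (μ : ℝ) (hμ : 0 < μ)
    (N : ℕ) (pts : Fin N → EuclideanSpace ℝ (Fin 2)) :
    MemLp (fun x : EuclideanSpace ℝ (Fin 2) =>
        -∑ j, Real.log (1 + μ * (‖x - pts j‖ ^ 2)⁻¹)) 2 volume ∧
    MemLp (fun x : EuclideanSpace ℝ (Fin 2) =>
        ∑ j, 4 * μ / (μ + ‖x - pts j‖ ^ 2) ^ 2) 2 volume := by
  constructor
  · have h := memLp_finset_sum (μ := volume) Finset.univ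
      (f := fun j (x : EuclideanSpace ℝ (Fin 2)) => Real.log (1 + μ * (‖x - pts j‖ ^ 2)⁻¹))
      (fun j _ => memL2_log μ hμ (pts j))
    simpa [Pi.neg_def] using h.neg
  · exact memLp_finset_sum Finset.univ (fun j _ => memL2_g μ hμ (pts j))
end

section
/- Let v : ℝ² → ℝ be a C¹ function with v ∈ L²(ℝ²) ∩ L⁴(ℝ²) and |∇v| ∈ L²(ℝ²), and suppose v satisfies the interpolation inequality ∫_{ℝ²} v⁴ dx ≤ 2·(∫_{ℝ²} v² dx)·(∫_{ℝ²} |∇v|² dx). Then (∫_{ℝ²} v² dx)² ≤ 4·(∫_{ℝ²} v²/(1+|v|)² dx)·(∫_{ℝ²} v² dx)·(1 + ∫_{ℝ²} |∇v|² dx). -/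
open MeasureTheory

/-- If `v : ℝ² → ℝ` is `C¹` with `v ∈ L² ∩ L⁴`, `|∇v| ∈ L²`, and `v`
satisfies the two-dimensional interpolation inequality `∫v⁴ ≤ 2(∫v²)(∫|∇v|²)`, then
`(∫v²)² ≤ 4·(∫ v²/(1+|v|)²)·(∫v²)·(1 + ∫|∇v|²)`. -/
theorem interpolation_consequence
    (v : EuclideanSpace ℝ (Fin 2) → ℝ)
    (hv : ContDiff ℝ 1 v)
    (hv2 : MemLp v 2 volume) (hv4 : MemLp v 4 volume)
    (hgrad : MemLp (fun x => ‖fderiv ℝ v x‖) 2 volume)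
    (hinterp : (∫ x, (v x) ^ 4) ≤
      2 * (∫ x, (v x) ^ 2) * (∫ x, ‖fderiv ℝ v x‖ ^ 2)) :
    (∫ x, (v x) ^ 2) ^ 2 ≤
      4 * (∫ x, (v x) ^ 2 / (1 + |v x|) ^ 2) * (∫ x, (v x) ^ 2)
        * (1 + ∫ x, ‖fderiv ℝ v x‖ ^ 2) := by
  have hvc : Continuous v := hv.continuous
  set f : EuclideanSpace ℝ (Fin 2) → ℝ := fun x => |v x| / (1 + |v x|) with hf_def
  set g : EuclideanSpace ℝ (Fin 2) → ℝ := fun x => |v x| * (1 + |v x|) with hg_def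
  have hpos : ∀ x, (0:ℝ) < 1 + |v x| := fun x => by positivity
  have rpow_two : ∀ y : ℝ, y ^ (2:ℝ) = y ^ 2 := fun y => by
    rw [show (2:ℝ) = ((2:ℕ):ℝ) by norm_num, Real.rpow_natCast]
  have hfc : Continuous f := hvc.abs.div (by continuity) (fun x => (hpos x).ne')
  have hgc : Continuous g := hvc.abs.mul (by continuity)
  -- `v² ∈ L²` since `v ∈ L⁴`
  have hsq : MemLp (fun x => v x ^ 2) 2 volume := by
    have h1 : MemLp (fun x => ‖v x‖ ^ (2:ℝ)) 2 volume := by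
      refine ⟨(hvc.norm.rpow_const (fun x => Or.inr (by norm_num))).aestronglyMeasurable, ?_⟩
      rw [eLpNorm_norm_rpow v (show (0:ℝ) < 2 by norm_num)]
      have h24 : (2 : ENNReal) * ENNReal.ofReal 2 = 4 := by
        rw [show ENNReal.ofReal (2:ℝ) = 2 by norm_num]; norm_num
      rw [h24]
      exact ENNReal.rpow_lt_top_of_nonneg (by norm_num) hv4.eLpNorm_ne_top
    have heq : (fun x => ‖v x‖ ^ (2:ℝ)) = fun x => v x ^ 2 := by
      ext x
      rw [rpow_two]
      simp [Real.norm_eq_abs, sq_abs]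
    rwa [heq] at h1
  have hfmem : MemLp f 2 volume := by
    refine hv2.of_le hfc.aestronglyMeasurable (Filter.Eventually.of_forall fun x => ?_)
    simp only [hf_def, Real.norm_eq_abs, abs_div, abs_abs, abs_of_pos (hpos x)]
    rw [div_le_iff₀ (hpos x)]
    nlinarith [abs_nonneg (v x)]
  have hgmem : MemLp g 2 volume := by
    have h : MemLp (fun x => |v x| + v x ^ 2) 2 volume := hv2.norm.add hsq
    refine h.ae_eq (Filter.Eventually.of_forall fun x => ?_)
    simp only [hg_def]
    linear_combination -sq_abs (v x)
  -- Hölder (Cauchy–Schwarz)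
  have hpq : Real.HolderConjugate 2 2 := Real.HolderConjugate.two_two
  have h2 : ENNReal.ofReal (2:ℝ) = 2 := by norm_num
  have hCS := integral_mul_le_Lp_mul_Lq_of_nonneg hpq
      (μ := volume)
      (Filter.Eventually.of_forall fun x => div_nonneg (abs_nonneg _) (hpos x).le)
      (Filter.Eventually.of_forall fun x => mul_nonneg (abs_nonneg _) (hpos x).le)
      (by rw [h2]; exact hfmem) (by rw [h2]; exact hgmem)
  -- `f * g = v²`
  have hfg : ∀ x, f x * g x = v x ^ 2 := fun x => by
    simp only [hf_def, hg_def]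
    rw [div_mul_eq_mul_div, div_eq_iff (hpos x).ne']
    linear_combination (1 + |v x|) * sq_abs (v x)
  have hfg_int : (∫ x, f x * g x) = ∫ x, v x ^ 2 := by
    exact integral_congr_ae (Filter.Eventually.of_forall hfg)
  -- `f x ^ 2 = v² / (1+|v|)²`
  have hf2 : ∀ x, f x ^ (2:ℝ) = v x ^ 2 / (1 + |v x|) ^ 2 := fun x => by
    rw [rpow_two]
    simp only [hf_def]
    rw [div_pow, sq_abs]
  have hf2_int : (∫ x, f x ^ (2:ℝ)) = ∫ x, v x ^ 2 / (1 + |v x|) ^ 2 :=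
    integral_congr_ae (Filter.Eventually.of_forall hf2)
  -- pointwise bound on `g²`
  have hg2_le : ∀ x, g x ^ (2:ℝ) ≤ 2 * v x ^ 2 + 2 * v x ^ 4 := fun x => by
    rw [rpow_two]
    simp only [hg_def]
    have h1 : |v x| ^ 2 = v x ^ 2 := sq_abs _
    have h2 : |v x| ^ 4 = v x ^ 4 := by rw [show 4 = 2*2 by rfl, pow_mul, pow_mul, h1]
    nlinarith [abs_nonneg (v x), sq_nonneg (|v x| * (|v x| - 1)), h1, h2]
  -- integrability facts
  have hv2_int : Integrable (fun x => v x ^ 2) volume := hv2.integrable_sq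
  have hv4_int : Integrable (fun x => v x ^ 4) volume := by
    have := hsq.integrable_sq
    refine this.congr (Filter.Eventually.of_forall fun x => ?_)
    show (v x ^ 2) ^ 2 = v x ^ 4
    ring
  have hg2_int : Integrable (fun x => g x ^ (2:ℝ)) volume := by
    have := hgmem.integrable_sq
    refine this.congr (Filter.Eventually.of_forall fun x => ?_)
    exact (rpow_two (g x)).symm
  have hG : (0:ℝ) ≤ ∫ x, ‖fderiv ℝ v x‖ ^ 2 := integral_nonneg fun x => by positivity
  have hB : (0:ℝ) ≤ ∫ x, v x ^ 2 := integral_nonneg fun x => by positivity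
  have hA : (0:ℝ) ≤ ∫ x, v x ^ 2 / (1 + |v x|) ^ 2 := integral_nonneg fun x => by positivity
  -- bound `∫ g²`
  have hC_le : (∫ x, g x ^ (2:ℝ)) ≤ 2 * (∫ x, v x ^ 2) + 2 * (∫ x, v x ^ 4) := by
    have := integral_mono hg2_int ((hv2_int.const_mul 2).add (hv4_int.const_mul 2)) hg2_le
    simpa [integral_add (hv2_int.const_mul 2) (hv4_int.const_mul 2),
      integral_const_mul] using this
  set A := ∫ x, v x ^ 2 / (1 + |v x|) ^ 2
  set B := ∫ x, v x ^ 2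
  set G := ∫ x, ‖fderiv ℝ v x‖ ^ 2
  set C := ∫ x, g x ^ (2:ℝ)
  have hC : (0:ℝ) ≤ C := integral_nonneg fun x => by positivity
  -- squared Cauchy–Schwarz : B² ≤ A * C
  have hBAC : B ^ 2 ≤ A * C := by
    have hCS' : B ≤ A ^ (1/2:ℝ) * C ^ (1/2:ℝ) := by
      rw [← hfg_int]
      calc (∫ x, f x * g x) ≤ (∫ x, f x ^ (2:ℝ)) ^ (1/(2:ℝ)) * (∫ x, g x ^ (2:ℝ)) ^ (1/(2:ℝ)) :=
            hCS
        _ = A ^ (1/2:ℝ) * C ^ (1/2:ℝ) := by rw [hf2_int]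
    have hsq2 : (A ^ (1/2:ℝ) * C ^ (1/2:ℝ)) ^ 2 = A * C := by
      rw [mul_pow, ← Real.rpow_natCast (A ^ (1/2:ℝ)) 2, ← Real.rpow_natCast (C ^ (1/2:ℝ)) 2,
        ← Real.rpow_mul hA, ← Real.rpow_mul hC]
      norm_num
    calc B ^ 2 ≤ (A ^ (1/2:ℝ) * C ^ (1/2:ℝ)) ^ 2 := by
          apply pow_le_pow_left₀ hB hCS'
      _ = A * C := hsq2
    -- done
  have hC_le' : C ≤ 2 * B + 4 * B * G := by
    calc C ≤ 2 * B + 2 * (∫ x, v x ^ 4) := hC_le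
      _ ≤ 2 * B + 2 * (2 * B * G) := by nlinarith
      _ = 2 * B + 4 * B * G := by ring
  calc B ^ 2 ≤ A * C := hBAC
    _ ≤ A * (2 * B + 4 * B * G) := by nlinarith
    _ ≤ 4 * A * B * (1 + G) := by nlinarith
end

section
/- There exists a constant C > 0 such that for every C¹ function v : ℝ² → ℝ with v ∈ L²(ℝ²) ∩ L⁴(ℝ²), |∇v| ∈ L²(ℝ²), and satisfying ∫_{ℝ²} v⁴ dx ≤ 2·(∫_{ℝ²} v² dx)·(∫_{ℝ²} |∇v|² dx), one has (∫_{ℝ²} v² dx)^{1/2} ≤ C·(1 + ∫_{ℝ²} v²/(1+|v|)² dx + ∫_{ℝ²} |∇v|² dx). -/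
open MeasureTheory

/-- inequality (eq18) of the paper. There is a constant `C > 0` such
that for every `C¹` function `v : ℝ² → ℝ` with `v ∈ L² ∩ L⁴`, `|∇v| ∈ L²`, and
`∫v⁴ ≤ 2(∫v²)(∫|∇v|²)`, one has
`(∫v²)^{1/2} ≤ C·(1 + ∫ v²/(1+|v|)² + ∫|∇v|²)`. -/
theorem L2_norm_coercivity_bound :
    ∃ C > (0 : ℝ),
      ∀ v : EuclideanSpace ℝ (Fin 2) → ℝ,
        ContDiff ℝ 1 v →
        MemLp v 2 volume → MemLp v 4 volume →
        MemLp (fun x => ‖fderiv ℝ v x‖) 2 volume →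
        (∫ x, (v x) ^ 4) ≤ 2 * (∫ x, (v x) ^ 2) * (∫ x, ‖fderiv ℝ v x‖ ^ 2) →
        Real.sqrt (∫ x, (v x) ^ 2) ≤
          C * (1 + (∫ x, (v x) ^ 2 / (1 + |v x|) ^ 2) + ∫ x, ‖fderiv ℝ v x‖ ^ 2) := by
  refine ⟨2, by norm_num, fun v hv hv2 hv4 hgrad hineq => ?_⟩
  have hvc : Continuous v := hv.continuous
  set A : ℝ := ∫ x, (v x) ^ 2 / (1 + |v x|) ^ 2 with hA
  set B : ℝ := ∫ x, (v x) ^ 2 with hB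
  set D : ℝ := ∫ x, ‖fderiv ℝ v x‖ ^ 2 with hD
  -- positivity of denominators
  have hden : ∀ x, (0 : ℝ) < 1 + |v x| := fun x => by positivity
  -- nonnegativity of the three integrals
  have hA0 : 0 ≤ A := integral_nonneg fun x => by positivity
  have hB0 : 0 ≤ B := integral_nonneg fun x => by positivity
  have hD0 : 0 ≤ D := integral_nonneg fun x => by positivity
  -- the two factors for Cauchy–Schwarz
  set f : EuclideanSpace ℝ (Fin 2) → ℝ := fun x => |v x| / (1 + |v x|) with hfdef
  set g : EuclideanSpace ℝ (Fin 2) → ℝ := fun x => |v x| * (1 + |v x|) with hgdef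
  have hfc : Continuous f := by
    apply hvc.abs.div (continuous_const.add hvc.abs)
    exact fun x => (hden x).ne'
  have hgc : Continuous g := hvc.abs.mul (continuous_const.add hvc.abs)
  -- MemLp facts
  have hf2 : MemLp f 2 volume := by
    refine MemLp.of_le hv2 hfc.aestronglyMeasurable (Filter.Eventually.of_forall fun x => ?_)
    have h := hden x
    have hle : f x ≤ |v x| := by
      simp only [hfdef]
      exact div_le_self (abs_nonneg _) (by linarith [abs_nonneg (v x)])
    have hf0 : 0 ≤ f x := by simp only [hfdef]; positivity
    rw [Real.norm_eq_abs, Real.norm_eq_abs, abs_of_nonneg hf0]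
    exact hle
  have hvsq : MemLp (fun x => (v x) ^ 2) 2 volume := by
    rw [memLp_two_iff_integrable_sq (f := fun x => v x ^ 2) (μ := volume)
      ((hvc.pow 2).aestronglyMeasurable : AEStronglyMeasurable (fun x => v x ^ 2) volume)]
    have h4 : Integrable (fun x => (v x) ^ 4) volume := by
      have h := hv4.integrable_norm_rpow (by norm_num) (by norm_num)
      refine h.congr (Filter.Eventually.of_forall fun x => ?_)
      show ‖v x‖ ^ ((4:ENNReal).toReal) = v x ^ 4
      rw [show ((4:ENNReal).toReal) = ((4:ℕ):ℝ) by norm_num, Real.rpow_natCast,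
        Real.norm_eq_abs, ← abs_pow, abs_of_nonneg (by positivity : (0:ℝ) ≤ v x ^ 4)]
    exact h4.congr (Filter.Eventually.of_forall fun x => by ring)
  have hg2 : MemLp g 2 volume := by
    have : g = fun x => |v x| + (v x) ^ 2 := by
      funext x
      show |v x| * (1 + |v x|) = |v x| + v x ^ 2
      rw [← sq_abs (v x)]; ring
    rw [this]
    exact hv2.abs.add hvsq
  -- integrability facts
  have hintB : Integrable (fun x => (v x) ^ 2) volume := hv2.integrable_sq
  have hint4 : Integrable (fun x => (v x) ^ 4) volume := by
    have := hvsq.integrable_sq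
    exact this.congr (Filter.Eventually.of_forall fun x => by ring)
  have hintg2 : Integrable (fun x => g x ^ 2) volume := hg2.integrable_sq
  -- Cauchy–Schwarz
  have hCS : B ≤ (∫ x, f x ^ 2) ^ ((1:ℝ)/2) * (∫ x, g x ^ 2) ^ ((1:ℝ)/2) := by
    have hpq : Real.HolderConjugate 2 2 := by
      constructor <;> norm_num
    have hfnn : (0:EuclideanSpace ℝ (Fin 2) → ℝ) ≤ᵐ[volume] f :=
      Filter.Eventually.of_forall fun x => by
        show (0:ℝ) ≤ |v x| / (1 + |v x|)
        have := hden x; positivity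
    have hgnn : (0:EuclideanSpace ℝ (Fin 2) → ℝ) ≤ᵐ[volume] g :=
      Filter.Eventually.of_forall fun x => by
        show (0:ℝ) ≤ |v x| * (1 + |v x|)
        have := hden x; positivity
    have hof : ENNReal.ofReal (2:ℝ) = 2 := by norm_num
    have h := integral_mul_le_Lp_mul_Lq_of_nonneg (μ := volume) hpq hfnn hgnn
      (by rw [hof]; exact hf2) (by rw [hof]; exact hg2)
    have h2 : ∫ x, f x * g x ≤ (∫ x, f x ^ 2) ^ ((1:ℝ)/2) * (∫ x, g x ^ 2) ^ ((1:ℝ)/2) := by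
      have e1 : (∫ x, f x ^ (2:ℝ)) = ∫ x, f x ^ 2 := by
        apply integral_congr_ae
        exact Filter.Eventually.of_forall fun x => Real.rpow_two _
      have e2 : (∫ x, g x ^ (2:ℝ)) = ∫ x, g x ^ 2 := by
        apply integral_congr_ae
        exact Filter.Eventually.of_forall fun x => Real.rpow_two _
      rw [← e1, ← e2]
      exact h
    refine le_trans (le_of_eq ?_) h2
    apply integral_congr_ae
    refine Filter.Eventually.of_forall fun x => ?_
    show v x ^ 2 = |v x| / (1 + |v x|) * (|v x| * (1 + |v x|))
    have hne := (hden x).ne'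
    field_simp
    rw [← sq_abs (v x)]
  -- identify ∫ f² with A
  have hfA : (∫ x, f x ^ 2) = A := by
    rw [hA]
    apply integral_congr_ae
    refine Filter.Eventually.of_forall fun x => ?_
    show (|v x| / (1 + |v x|)) ^ 2 = v x ^ 2 / (1 + |v x|) ^ 2
    rw [div_pow, sq_abs]
  -- bound ∫ g²
  have hg2bound : (∫ x, g x ^ 2) ≤ 2 * B + 2 * (∫ x, (v x) ^ 4) := by
    have : (∫ x, g x ^ 2) ≤ ∫ x, 2 * (v x) ^ 2 + 2 * (v x) ^ 4 := by
      apply integral_mono hintg2 (by exact (hintB.const_mul 2).add (hint4.const_mul 2))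
      intro x
      show (|v x| * (1 + |v x|)) ^ 2 ≤ 2 * v x ^ 2 + 2 * v x ^ 4
      have ht2 : v x ^ 2 = |v x| ^ 2 := (sq_abs _).symm
      have ht4 : v x ^ 4 = |v x| ^ 4 := by
        rw [show (4:ℕ) = 2*2 by norm_num, pow_mul, pow_mul, ht2]
      rw [ht2, ht4]
      nlinarith [abs_nonneg (v x), sq_nonneg (|v x| - |v x| ^ 2)]
    rwa [integral_add (hintB.const_mul 2) (hint4.const_mul 2),
      integral_const_mul, integral_const_mul] at this
  -- combine: B ≤ √A · √(B·(2+4D))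
  have h4B : (∫ x, (v x) ^ 4) ≤ 2 * B * D := hineq
  have key : B ≤ Real.sqrt A * Real.sqrt (B * (2 + 4 * D)) := by
    have h1 : (∫ x, g x ^ 2) ≤ B * (2 + 4 * D) := by nlinarith
    have hg20 : 0 ≤ ∫ x, g x ^ 2 := integral_nonneg fun x => sq_nonneg _
    calc B ≤ (∫ x, f x ^ 2) ^ ((1:ℝ)/2) * (∫ x, g x ^ 2) ^ ((1:ℝ)/2) := hCS
      _ = Real.sqrt A * Real.sqrt (∫ x, g x ^ 2) := by
          rw [hfA, Real.sqrt_eq_rpow, Real.sqrt_eq_rpow]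
      _ ≤ Real.sqrt A * Real.sqrt (B * (2 + 4 * D)) := by
          apply mul_le_mul_of_nonneg_left (Real.sqrt_le_sqrt h1) (Real.sqrt_nonneg _)
  -- deduce √B ≤ √A · √(2+4D)
  have hsB : Real.sqrt B ≤ Real.sqrt A * Real.sqrt (2 + 4 * D) := by
    rcases eq_or_lt_of_le hB0 with h | h
    · rw [← h, Real.sqrt_zero]; positivity
    · have hsBpos : 0 < Real.sqrt B := Real.sqrt_pos.mpr h
      have : Real.sqrt B * Real.sqrt B ≤ Real.sqrt A * (Real.sqrt B * Real.sqrt (2 + 4 * D)) := by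
        rw [Real.mul_self_sqrt hB0]
        calc B ≤ Real.sqrt A * Real.sqrt (B * (2 + 4 * D)) := key
          _ = Real.sqrt A * (Real.sqrt B * Real.sqrt (2 + 4 * D)) := by
              rw [Real.sqrt_mul hB0]
      have := le_of_mul_le_mul_right (by linarith [this] : Real.sqrt B * Real.sqrt B ≤
        (Real.sqrt A * Real.sqrt (2 + 4 * D)) * Real.sqrt B) hsBpos
      linarith [this]
  -- AM–GM finish
  have hamgm : Real.sqrt A * Real.sqrt (2 + 4 * D) ≤ (A + (2 + 4 * D)) / 2 := by
    nlinarith [Real.sq_sqrt hA0, Real.sq_sqrt (by linarith : (0:ℝ) ≤ 2 + 4 * D),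
      sq_nonneg (Real.sqrt A - Real.sqrt (2 + 4 * D))]
  calc Real.sqrt B ≤ (A + (2 + 4 * D)) / 2 := le_trans hsB hamgm
    _ ≤ 2 * (1 + A + D) := by linarith
end

section
/- Let f ∈ L²(ℝ²) be a measurable function, and suppose there exists M ≥ 0 such that f ∈ L^k(ℝ²) with ‖f‖_{L^k} ≤ (π·(k/2 − 1))^{(k−2)/(2k)}·M for every integer k ≥ 3. Then the function e^f − 1 belongs to L²(ℝ²), the series Σ_{k=3}^{∞} ((2^k − 2)/k!)·(π·(k/2 − 1))^{(k−2)/2}·M^k converges, and ‖e^f − 1‖_{L²}² ≤ ‖f‖_{L²}² + Σ_{k=3}^{∞} ((2^k − 2)/k!)·(π·(k/2 − 1))^{(k−2)/2}·M^k. -/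
set_option maxHeartbeats 1000000
open MeasureTheory


lemma pow_le_exp_mul_factorial (n : ℕ) : (n : ℝ) ^ n ≤ Real.exp n * n.factorial := by
  induction n with
  | zero => simp
  | succ n ih =>
    rcases Nat.eq_zero_or_pos n with h | h
    · subst h
      norm_num
    have hn : (0:ℝ) < n := by exact_mod_cast h
    have key : ((n:ℝ) + 1) ^ n ≤ Real.exp 1 * (n:ℝ) ^ n := by
      have h1 : (1 + 1/(n:ℝ)) ≤ Real.exp (1/(n:ℝ)) := by
        have := Real.add_one_le_exp (1/(n:ℝ)); linarith
      have h2 : (1 + 1/(n:ℝ)) ^ n ≤ Real.exp (1/(n:ℝ)) ^ n :=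
        pow_le_pow_left₀ (by positivity) h1 n
      have h3 : Real.exp (1/(n:ℝ)) ^ n = Real.exp 1 := by
        rw [← Real.exp_nat_mul]; congr 1; field_simp
      have h4 : ((n:ℝ) + 1) ^ n = (1 + 1/(n:ℝ)) ^ n * (n:ℝ) ^ n := by
        rw [← mul_pow]; congr 1; field_simp
      rw [h4]
      rw [h3] at h2
      exact mul_le_mul_of_nonneg_right h2 (by positivity)
    have hfact : (0:ℝ) ≤ n.factorial := by positivity
    push_cast
    calc ((n:ℝ)+1)^(n+1) = ((n:ℝ)+1)^n * ((n:ℝ)+1) := by ring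
      _ ≤ (Real.exp 1 * (n:ℝ)^n) * ((n:ℝ)+1) := by
          exact mul_le_mul_of_nonneg_right key (by positivity)
      _ ≤ (Real.exp 1 * (Real.exp n * n.factorial)) * ((n:ℝ)+1) := by
          apply mul_le_mul_of_nonneg_right _ (by positivity)
          exact mul_le_mul_of_nonneg_left ih (le_of_lt (Real.exp_pos 1))
      _ = Real.exp ((n:ℝ)+1) * ((n.factorial : ℝ) * ((n:ℝ)+1)) := by
          rw [Real.exp_add]; ring
      _ = Real.exp ((n:ℝ)+1) * (((n+1).factorial : ℕ) : ℝ) := by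
          rw [Nat.factorial_succ]; push_cast; ring


lemma real_exp_tsum (x : ℝ) : Real.exp x = ∑' n : ℕ, x ^ n / n.factorial := by
  rw [Real.exp_eq_exp_ℝ, NormedSpace.exp_eq_tsum_div]

lemma ptwise (t : ℝ) :
    Summable (fun k : ℕ => ((2 ^ (k+3) - 2 : ℝ) / (k+3).factorial) * |t| ^ (k+3)) ∧
    (Real.exp t - 1) ^ 2 ≤ t ^ 2 +
      ∑' k : ℕ, ((2 ^ (k+3) - 2 : ℝ) / (k+3).factorial) * |t| ^ (k+3) := by
  set c : ℕ → ℝ := fun k => (2 ^ k - 2 : ℝ) / k.factorial with hc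
  have hs2t : Summable (fun k : ℕ => (2*t) ^ k / k.factorial) :=
    Real.summable_pow_div_factorial (2*t)
  have hst : Summable (fun k : ℕ => 2 * (t ^ k / k.factorial)) :=
    (Real.summable_pow_div_factorial t).mul_left 2
  have heq : ∀ (s : ℝ) (k : ℕ), c k * s ^ k = (2*s) ^ k / k.factorial - 2 * (s ^ k / k.factorial) := by
    intro s k
    have : ((k.factorial : ℝ)) ≠ 0 := by positivity
    field_simp [hc, mul_pow]
    simp only [hc]; field_simp; ring
  have hsum : ∀ s : ℝ, Summable (fun k : ℕ => c k * s ^ k) := by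
    intro s
    have := (Real.summable_pow_div_factorial (2*s)).sub
      ((Real.summable_pow_div_factorial s).mul_left 2)
    simpa [← heq s] using this
  have hid : ∑' k : ℕ, c k * t ^ k = Real.exp (2*t) - 2 * Real.exp t := by
    have := Summable.tsum_sub hs2t hst
    rw [real_exp_tsum (2*t), real_exp_tsum t, ← tsum_mul_left]
    rw [← this]
    exact tsum_congr fun k => heq t k
  have hsq : (Real.exp t - 1) ^ 2 = t ^ 2 + ∑' k : ℕ, c (k+3) * t ^ (k+3) := by
    have hsplit := Summable.sum_add_tsum_nat_add (f := fun k : ℕ => c k * t ^ k) 3 (hsum t)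
    have hfin : (∑ k ∈ Finset.range 3, c k * t ^ k) = -1 + t ^ 2 := by
      simp [Finset.sum_range_succ, hc, Nat.factorial]
      ring
    have h2 : (Real.exp t - 1) ^ 2 = Real.exp (2*t) - 2 * Real.exp t + 1 := by
      have h2t : Real.exp (2*t) = Real.exp t * Real.exp t := by
        rw [two_mul, Real.exp_add]
      rw [h2t]
      ring
    rw [h2, ← hid, ← hsplit, hfin]
    ring
  have hshift : Summable (fun k : ℕ => c (k+3) * t ^ (k+3)) :=
    (summable_nat_add_iff 3).mpr (hsum t)
  have hshiftabs : Summable (fun k : ℕ => c (k+3) * |t| ^ (k+3)) :=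
    (summable_nat_add_iff 3).mpr (hsum |t|)
  refine ⟨hshiftabs, ?_⟩
  rw [hsq]
  gcongr t ^ 2 + ?_
  apply Summable.tsum_le_tsum _ hshift hshiftabs
  intro k
  have hck : 0 ≤ c (k+3) := by
    apply div_nonneg _ (by positivity)
    have : (2:ℝ) ≤ 2 ^ (k+3) := by
      calc (2:ℝ) = 2^1 := by norm_num
        _ ≤ 2 ^ (k+3) := pow_le_pow_right₀ (by norm_num) (by omega)
    linarith
  apply mul_le_mul_of_nonneg_left _ hck
  calc t ^ (k+3) ≤ |t ^ (k+3)| := le_abs_self _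
    _ = |t| ^ (k+3) := abs_pow t (k+3)



open Real in
lemma summable_A (M : ℝ) (hM : 0 ≤ M) :
    Summable (fun k : ℕ => if 3 ≤ k then
        ((2 ^ k - 2 : ℝ) / (Nat.factorial k)) *
          (Real.pi * ((k : ℝ) / 2 - 1)) ^ (((k : ℝ) - 2) / 2) * M ^ k
      else 0) := by
  set A : ℕ → ℝ := fun k => if 3 ≤ k then
      ((2 ^ k - 2 : ℝ) / (Nat.factorial k)) *
        (Real.pi * ((k : ℝ) / 2 - 1)) ^ (((k : ℝ) - 2) / 2) * M ^ k
    else 0 with hA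
  set q : ℝ := 2 * M * Real.sqrt Real.pi * Real.exp 1 with hq
  have hq0 : 0 ≤ q := by positivity
  set K : ℕ := max 3 ⌈(2*q)^2⌉₊ with hK
  -- key bound
  have key : ∀ k : ℕ, 3 ≤ k → 2*q ≤ Real.sqrt k → A k ≤ (1/2 : ℝ) ^ k := by
    intro k hk3 hkq
    have hk3R : (3:ℝ) ≤ (k:ℝ) := by exact_mod_cast hk3
    have hkpos : (0:ℝ) < k := by linarith
    have hP : 0 ≤ Real.pi * ((k:ℝ)/2 - 1) := by
      have := Real.pi_pos; nlinarith
    have hsk : 0 < Real.sqrt k := Real.sqrt_pos.mpr hkpos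
    have hpik : (0:ℝ) ≤ Real.pi * k := by positivity
    have h1 : (Real.pi * ((k:ℝ)/2 - 1)) ^ (((k:ℝ)-2)/2) ≤ Real.sqrt (Real.pi * k) ^ k := by
      calc (Real.pi * ((k:ℝ)/2 - 1)) ^ (((k:ℝ)-2)/2)
          ≤ (Real.pi * k) ^ (((k:ℝ)-2)/2) := by
            apply Real.rpow_le_rpow hP _ (by linarith)
            have := Real.pi_pos; nlinarith
        _ ≤ (Real.pi * k) ^ ((k:ℝ)/2) := by
            apply Real.rpow_le_rpow_of_exponent_le _ (by linarith)
            have := Real.pi_gt_three; nlinarith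
        _ = Real.sqrt (Real.pi * k) ^ k := by
            rw [Real.sqrt_eq_rpow, ← Real.rpow_natCast ((Real.pi * k) ^ ((1:ℝ)/2)) k,
              ← Real.rpow_mul hpik]
            congr 1; ring
    have hfac : (k:ℝ)^k / Real.exp k ≤ k.factorial := by
      rw [div_le_iff₀ (Real.exp_pos _)]
      calc (k:ℝ)^k ≤ Real.exp k * k.factorial := pow_le_exp_mul_factorial k
        _ = (k.factorial : ℝ) * Real.exp k := by ring
    have hfacpos : (0:ℝ) < k.factorial := by positivity
    have step1 : A k ≤ (2 * Real.sqrt (Real.pi * k) * M)^k / k.factorial := by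
      rw [hA]
      simp only [if_pos hk3]
      calc (2 ^ k - 2 : ℝ) / (k.factorial) * (Real.pi * ((k:ℝ)/2 - 1)) ^ (((k:ℝ)-2)/2) * M ^ k
          ≤ (2 ^ k : ℝ) / (k.factorial) * (Real.sqrt (Real.pi * k) ^ k) * M ^ k := by
            apply mul_le_mul_of_nonneg_right _ (by positivity)
            apply mul_le_mul
            · gcongr
              norm_num
            · exact h1
            · exact Real.rpow_nonneg hP _
            · positivity
        _ = (2 * Real.sqrt (Real.pi * k) * M)^k / k.factorial := by
            rw [mul_pow, mul_pow]; ring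
    have step2 : (2 * Real.sqrt (Real.pi * k) * M)^k / k.factorial
        ≤ (2 * Real.sqrt (Real.pi * k) * M)^k * Real.exp k / (k:ℝ)^k := by
      rw [div_le_div_iff₀ hfacpos (by positivity)]
      have hnum : (0:ℝ) ≤ (2 * Real.sqrt (Real.pi * k) * M)^k := by positivity
      calc (2 * Real.sqrt (Real.pi * k) * M)^k * (k:ℝ)^k
          ≤ (2 * Real.sqrt (Real.pi * k) * M)^k * (Real.exp k * k.factorial) := by
            apply mul_le_mul_of_nonneg_left _ hnum
            exact pow_le_exp_mul_factorial k
        _ = (2 * Real.sqrt (Real.pi * k) * M)^k * Real.exp k * k.factorial := by ring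
    have heqq : (2 * Real.sqrt (Real.pi * k) * M)^k * Real.exp k / (k:ℝ)^k
        = (q / Real.sqrt k)^k := by
      have hsq : Real.sqrt (Real.pi * k) = Real.sqrt Real.pi * Real.sqrt k :=
        Real.sqrt_mul Real.pi_pos.le k
      have hss : Real.sqrt k * Real.sqrt k = (k:ℝ) := Real.mul_self_sqrt hkpos.le
      have hek : Real.exp (k:ℝ) = Real.exp 1 ^ k := by
        rw [← Real.exp_nat_mul]; norm_num
      have hbase : q / Real.sqrt k = 2 * Real.sqrt (Real.pi * k) * M * Real.exp 1 / k := by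
        rw [hsq, hq, div_eq_div_iff hsk.ne' hkpos.ne']
        nlinarith [hss]
      rw [hbase, hek, div_pow]
      ring
    have final : (q / Real.sqrt k)^k ≤ (1/2:ℝ)^k := by
      apply pow_le_pow_left₀ (by positivity)
      rw [div_le_iff₀ hsk]
      linarith
    calc A k ≤ _ := step1
      _ ≤ _ := step2
      _ = _ := heqq
      _ ≤ _ := final
  have hA0 : ∀ k, 0 ≤ A k := by
    intro k
    rw [hA]
    dsimp only
    split
    · rename_i hk3
      have hk3R : (3:ℝ) ≤ (k:ℝ) := by exact_mod_cast hk3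
      have hP : 0 ≤ Real.pi * ((k:ℝ)/2 - 1) := by
        have := Real.pi_pos; nlinarith
      have h2k : (2:ℝ) ≤ 2^k :=
        le_trans (by norm_num) (pow_le_pow_right₀ (by norm_num) hk3 : (2:ℝ)^3 ≤ 2^k)
      have hf : (0:ℝ) < k.factorial := by positivity
      exact mul_nonneg (mul_nonneg (div_nonneg (by linarith) hf.le)
        (Real.rpow_nonneg hP _)) (by positivity)
    · exact le_rfl
  rw [← summable_nat_add_iff K]
  apply Summable.of_nonneg_of_le (fun n => hA0 _) (f := fun n => (1/2:ℝ)^(n+K))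
  · intro n
    apply key
    · have : 3 ≤ K := le_max_left _ _
      omega
    · have h1 : ((2*q)^2 : ℝ) ≤ ((n + K : ℕ) : ℝ) := by
        have h2 : ((2*q)^2 : ℝ) ≤ (⌈(2*q)^2⌉₊ : ℝ) := Nat.le_ceil _
        have h3 : (⌈(2*q)^2⌉₊ : ℕ) ≤ n + K := by
          have : ⌈(2*q)^2⌉₊ ≤ K := le_max_right _ _
          omega
        exact h2.trans (by exact_mod_cast h3)
      rw [show (2*q : ℝ) = |2*q| from (abs_of_nonneg (by positivity)).symm]
      rw [← Real.sqrt_sq_eq_abs]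
      exact Real.sqrt_le_sqrt h1
  · simpa [pow_add] using ((summable_geometric_of_lt_one (by norm_num) (by norm_num) :
      Summable (fun n : ℕ => (1/2:ℝ)^n)).mul_right ((1/2:ℝ)^K))


/-- Let `f ∈ L²(ℝ²)` and suppose there is `M ≥ 0` such that for every
integer `k ≥ 3`, `f ∈ L^k(ℝ²)` with `‖f‖_{L^k} ≤ (π(k/2 − 1))^{(k−2)/(2k)}·M`
(equivalently `∫|f|^k ≤ ((π(k/2 − 1))^{(k−2)/(2k)}·M)^k`). Then `e^f − 1 ∈ L²(ℝ²)`,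
the series `Σ_{k≥3} ((2^k−2)/k!)(π(k/2−1))^{(k−2)/2} M^k` converges, and
`‖e^f − 1‖₂² ≤ ‖f‖₂² + Σ_{k≥3} ((2^k−2)/k!)(π(k/2−1))^{(k−2)/2} M^k`. -/
theorem exp_sub_one_mem_L2
    (f : EuclideanSpace ℝ (Fin 2) → ℝ) (M : ℝ) (hM : 0 ≤ M)
    (hf2 : MemLp f 2 volume)
    (hfk : ∀ k : ℕ, 3 ≤ k →
      Integrable (fun x => |f x| ^ k) ∧
      (∫ x, |f x| ^ k) ≤
        ((Real.pi * ((k : ℝ) / 2 - 1)) ^ (((k : ℝ) - 2) / (2 * k)) * M) ^ k) :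
    MemLp (fun x => Real.exp (f x) - 1) 2 volume ∧
    Summable (fun k : ℕ => if 3 ≤ k then
        ((2 ^ k - 2 : ℝ) / (Nat.factorial k)) *
          (Real.pi * ((k : ℝ) / 2 - 1)) ^ (((k : ℝ) - 2) / 2) * M ^ k
      else 0) ∧
    (∫ x, (Real.exp (f x) - 1) ^ 2) ≤
      (∫ x, (f x) ^ 2) +
        ∑' k : ℕ, (if 3 ≤ k then
          ((2 ^ k - 2 : ℝ) / (Nat.factorial k)) *
            (Real.pi * ((k : ℝ) / 2 - 1)) ^ (((k : ℝ) - 2) / 2) * M ^ k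
        else 0) := by
  have hSA := summable_A M hM
  set A : ℕ → ℝ := fun k => if 3 ≤ k then
      ((2 ^ k - 2 : ℝ) / (Nat.factorial k)) *
        (Real.pi * ((k : ℝ) / 2 - 1)) ^ (((k : ℝ) - 2) / 2) * M ^ k
    else 0 with hA
  set g : EuclideanSpace ℝ (Fin 2) → ℝ := fun x => Real.exp (f x) - 1 with hg
  have hmg : AEStronglyMeasurable g volume :=
    (Real.continuous_exp.comp_aestronglyMeasurable hf2.1).sub aestronglyMeasurable_const
  have hfm : AEMeasurable f volume := hf2.1.aemeasurable
  -- shifted series sum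
  have hSA3 : Summable (fun k : ℕ => A (k + 3)) := (summable_nat_add_iff 3).mpr hSA
  set S : ℝ := ∑' k : ℕ, A (k + 3) with hS
  have hA3nonneg : ∀ k : ℕ, 0 ≤ A (k + 3) := by
    intro k
    rw [hA]
    simp only [if_pos (by omega : 3 ≤ k + 3)]
    have hk3R : (3:ℝ) ≤ ((k+3 : ℕ):ℝ) := by push_cast; linarith [Nat.cast_nonneg (α := ℝ) k]
    have hP : 0 ≤ Real.pi * (((k+3:ℕ):ℝ)/2 - 1) := by have := Real.pi_pos; nlinarith
    have h2k : (2:ℝ) ≤ 2^(k+3) :=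
      le_trans (by norm_num) (pow_le_pow_right₀ (by norm_num) (by omega) : (2:ℝ)^3 ≤ 2^(k+3))
    have hf3 : (0:ℝ) < (k+3).factorial := by positivity
    exact mul_nonneg (mul_nonneg (div_nonneg (by linarith) hf3.le)
      (Real.rpow_nonneg hP _)) (by positivity)
  have hS0 : 0 ≤ S := tsum_nonneg hA3nonneg
  -- statement tsum equals S
  have htsumA : ∑' k : ℕ, A k = S := by
    have := Summable.sum_add_tsum_nat_add (f := A) 3 hSA
    have h0 : (∑ k ∈ Finset.range 3, A k) = 0 := by
      norm_num [hA, Finset.sum_range_succ]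
    rw [← this, h0, zero_add]
  -- integrability of f^2
  have hif2 : Integrable (fun x => (f x)^2) volume :=
    (memLp_two_iff_integrable_sq hf2.1).mp hf2
  -- identity relating hfk bound to A
  have idA : ∀ n : ℕ, 3 ≤ n →
      ((Real.pi * ((n : ℝ) / 2 - 1)) ^ (((n : ℝ) - 2) / (2 * n)) * M) ^ n
        = (Real.pi * ((n : ℝ) / 2 - 1)) ^ (((n : ℝ) - 2) / 2) * M ^ n := by
    intro n hn
    have hn3R : (3:ℝ) ≤ (n:ℝ) := by exact_mod_cast hn
    have hx : 0 ≤ Real.pi * ((n:ℝ)/2 - 1) := by have := Real.pi_pos; nlinarith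
    rw [mul_pow, ← Real.rpow_natCast ((Real.pi * ((n:ℝ)/2 - 1)) ^ (((n:ℝ)-2)/(2*n))) n,
      ← Real.rpow_mul hx]
    congr 2
    have : (n:ℝ) ≠ 0 := by linarith
    field_simp
  -- the ENNReal chain
  set c : ℕ → ℝ := fun k => (2 ^ k - 2 : ℝ) / k.factorial with hc
  have hcnn : ∀ k : ℕ, 0 ≤ c (k + 3) := by
    intro k
    have h2k : (2:ℝ) ≤ 2^(k+3) :=
      le_trans (by norm_num) (pow_le_pow_right₀ (by norm_num) (by omega) : (2:ℝ)^3 ≤ 2^(k+3))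
    have : (0:ℝ) < (k+3).factorial := by positivity
    rw [hc]
    exact div_nonneg (by linarith) this.le
  have hterm : ∀ k : ℕ, (∫⁻ x, ENNReal.ofReal (c (k+3) * |f x| ^ (k+3)) ∂volume)
      ≤ ENNReal.ofReal (A (k+3)) := by
    intro k
    have hint : Integrable (fun x => c (k+3) * |f x| ^ (k+3)) volume :=
      ((hfk (k+3) (by omega)).1).const_mul _
    have hnn : (0 : EuclideanSpace ℝ (Fin 2) → ℝ) ≤ᵐ[volume] fun x => c (k+3) * |f x| ^ (k+3) :=
      Filter.Eventually.of_forall fun x => by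
        simp only [Pi.zero_apply]
        exact mul_nonneg (hcnn k) (by positivity)
    rw [← ofReal_integral_eq_lintegral_ofReal hint hnn]
    apply ENNReal.ofReal_le_ofReal
    rw [MeasureTheory.integral_const_mul]
    calc c (k+3) * ∫ x, |f x| ^ (k+3)
        ≤ c (k+3) * (((Real.pi * (((k+3:ℕ) : ℝ) / 2 - 1)) ^ ((((k+3:ℕ) : ℝ) - 2) / (2 * (k+3:ℕ))) * M) ^ (k+3)) := by
          exact mul_le_mul_of_nonneg_left (hfk (k+3) (by omega)).2 (hcnn k)
      _ = A (k+3) := by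
          rw [idA (k+3) (by omega), hA]
          simp only [if_pos (by omega : 3 ≤ k + 3)]
          ring
  -- pointwise bound in ENNReal
  have hpt : ∀ x, ENNReal.ofReal ((g x)^2)
      ≤ ENNReal.ofReal ((f x)^2) + ∑' k : ℕ, ENNReal.ofReal (c (k+3) * |f x| ^ (k+3)) := by
    intro x
    obtain ⟨hsum, hle⟩ := ptwise (f x)
    have h1 : ENNReal.ofReal ((g x)^2)
        ≤ ENNReal.ofReal ((f x)^2 + ∑' k : ℕ, c (k+3) * |f x| ^ (k+3)) :=
      ENNReal.ofReal_le_ofReal hle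
    rw [ENNReal.ofReal_add (sq_nonneg _) (tsum_nonneg fun k => mul_nonneg (hcnn k) (by positivity)),
      ENNReal.ofReal_tsum_of_nonneg (fun k => mul_nonneg (hcnn k) (by positivity)) hsum] at h1
    exact h1
  -- measurability helpers
  have hmeas2 : AEMeasurable (fun x => ENNReal.ofReal ((f x)^2)) volume :=
    ENNReal.measurable_ofReal.comp_aemeasurable ((hfm.pow_const 2))
  have hmeask : ∀ k : ℕ, AEMeasurable (fun x => ENNReal.ofReal (c (k+3) * |f x| ^ (k+3))) volume := by
    intro k
    exact ENNReal.measurable_ofReal.comp_aemeasurable ((((continuous_abs.measurable.comp_aemeasurable hfm).pow_const (k+3)).const_mul _))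
  -- main lintegral bound
  have hmain : (∫⁻ x, ENNReal.ofReal ((g x)^2) ∂volume)
      ≤ ENNReal.ofReal (∫ x, (f x)^2) + ENNReal.ofReal S := by
    calc (∫⁻ x, ENNReal.ofReal ((g x)^2) ∂volume)
        ≤ ∫⁻ x, (ENNReal.ofReal ((f x)^2)
            + ∑' k : ℕ, ENNReal.ofReal (c (k+3) * |f x| ^ (k+3))) ∂volume :=
          lintegral_mono hpt
      _ = (∫⁻ x, ENNReal.ofReal ((f x)^2) ∂volume)
            + ∫⁻ x, ∑' k : ℕ, ENNReal.ofReal (c (k+3) * |f x| ^ (k+3)) ∂volume :=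
          lintegral_add_left' hmeas2 _
      _ = (∫⁻ x, ENNReal.ofReal ((f x)^2) ∂volume)
            + ∑' k : ℕ, ∫⁻ x, ENNReal.ofReal (c (k+3) * |f x| ^ (k+3)) ∂volume := by
          rw [lintegral_tsum hmeask]
      _ ≤ ENNReal.ofReal (∫ x, (f x)^2) + ∑' k : ℕ, ENNReal.ofReal (A (k+3)) := by
          gcongr with k
          · rw [ofReal_integral_eq_lintegral_ofReal hif2
              (Filter.Eventually.of_forall fun x => sq_nonneg _)]
          · exact hterm k
      _ = ENNReal.ofReal (∫ x, (f x)^2) + ENNReal.ofReal S := by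
          rw [ENNReal.ofReal_tsum_of_nonneg hA3nonneg hSA3]
  have hRHSne : ENNReal.ofReal (∫ x, (f x)^2) + ENNReal.ofReal S ≠ ⊤ := by
    exact ENNReal.add_ne_top.mpr ⟨ENNReal.ofReal_ne_top, ENNReal.ofReal_ne_top⟩
  have hfin : (∫⁻ x, ENNReal.ofReal ((g x)^2) ∂volume) < ⊤ :=
    lt_of_le_of_lt hmain (lt_top_iff_ne_top.mpr hRHSne)
  have hmg2 : AEStronglyMeasurable (fun x => (g x)^2) volume :=
    (continuous_pow 2).comp_aestronglyMeasurable hmg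
  have hintg2 : Integrable (fun x => (g x)^2) volume := by
    refine ⟨hmg2, ?_⟩
    rw [hasFiniteIntegral_iff_ofReal (Filter.Eventually.of_forall fun x => sq_nonneg _)]
    exact hfin
  refine ⟨(memLp_two_iff_integrable_sq hmg).mpr hintg2, hSA, ?_⟩
  -- final inequality
  have e1 : (∫ x, (g x)^2) = (∫⁻ x, ENNReal.ofReal ((g x)^2) ∂volume).toReal :=
    integral_eq_lintegral_of_nonneg_ae (Filter.Eventually.of_forall fun x => sq_nonneg _) hmg2
  have hInt2 : 0 ≤ ∫ x, (f x)^2 := integral_nonneg fun x => sq_nonneg _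
  calc (∫ x, (g x)^2) = (∫⁻ x, ENNReal.ofReal ((g x)^2) ∂volume).toReal := e1
    _ ≤ (ENNReal.ofReal (∫ x, (f x)^2) + ENNReal.ofReal S).toReal :=
        ENNReal.toReal_mono hRHSne hmain
    _ = (∫ x, (f x)^2) + S := by
        rw [ENNReal.toReal_add ENNReal.ofReal_ne_top ENNReal.ofReal_ne_top,
          ENNReal.toReal_ofReal hInt2, ENNReal.toReal_ofReal hS0]
    _ = (∫ x, (f x)^2) + ∑' k : ℕ, A k := by rw [htsumA]
end

section
/- Let w : ℝ² → ℝ be a C² function such that w, both first partial derivatives of w, and all second partial derivatives of w belong to L²(ℝ²). Then w tends to zero uniformly at infinity: lim_{R→∞} sup_{|x| = R} |w(x)| = 0. -/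
open MeasureTheory Filter

lemma l2_mul_int {α : Type*} [MeasurableSpace α] {μ : Measure α} {f g : α → ℝ}
    (hf : MemLp f 2 μ) (hg : MemLp g 2 μ) : Integrable (fun x => f x * g x) μ := by
  have h := hg.smul (φ := f) hf (r := 1)
  rw [memLp_one_iff_integrable] at h
  simpa [Pi.smul_apply, smul_eq_mul, Pi.mul_def] using h

lemma tail_tendsto_zero {G : ℝ → ℝ} (hG : Integrable G) :
    Tendsto (fun R : ℝ => ∫ t in Set.Ioi R, G t) atTop (nhds 0) := by
  have h := MeasureTheory.tendsto_integral_filter_of_dominated_convergence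
      (μ := (volume : Measure ℝ)) (F := fun (R : ℝ) => Set.indicator (Set.Ioi R) G)
      (f := fun _ => (0:ℝ)) (bound := fun t => |G t|)
      (l := atTop)
      (by
        filter_upwards with R
        exact (hG.aestronglyMeasurable.indicator measurableSet_Ioi))
      (by
        filter_upwards with R
        filter_upwards with t
        rw [← Real.norm_eq_abs]
        exact norm_indicator_le_norm_self (f := G) (s := Set.Ioi R) (a := t))
      (hG.abs)
      (by
        filter_upwards with t
        have h0 : ∀ᶠ R in (atTop : Filter ℝ), Set.indicator (Set.Ioi R) G t = 0 := by
          filter_upwards [eventually_ge_atTop t] with R hR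
          simp [Set.indicator_of_notMem, not_lt.2 hR]
        exact Tendsto.congr' (h0.mono fun R hR => hR.symm) tendsto_const_nhds)
  simpa [integral_indicator measurableSet_Ioi, integral_zero] using h

lemma oneD_tendsto {g g' : ℝ → ℝ} (hd : ∀ t, HasDerivAt g (g' t) t)
    (hg' : Integrable g') (x : ℝ) :
    Tendsto g atTop (nhds (g x + ∫ t in Set.Ioi x, g' t)) := by
  have key : ∀ y, g y = g x + ∫ t in x..y, g' t := by
    intro y
    rw [intervalIntegral.integral_eq_sub_of_hasDerivAt (fun t _ => hd t)
      hg'.intervalIntegrable]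
    ring
  have h2 : Tendsto (fun y => ∫ t in x..y, g' t) atTop (nhds (∫ t in Set.Ioi x, g' t)) :=
    MeasureTheory.intervalIntegral_tendsto_integral_Ioi x hg'.integrableOn tendsto_id
  exact (tendsto_const_nhds.add h2).congr fun y => (key y).symm

lemma oneD_limit_zero {g : ℝ → ℝ} {c : ℝ} (hg : Integrable g)
    (hc : Tendsto g atTop (nhds c)) : c = 0 := by
  by_contra h
  have hev : ∀ᶠ y in (atTop : Filter ℝ), |c|/2 ≤ |g y| := by
    have h1 := hc.eventually (Metric.ball_mem_nhds c (by positivity : (0:ℝ) < |c|/2))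
    filter_upwards [h1] with y hy
    have : |g y - c| < |c|/2 := by simpa [Real.dist_eq] using hy
    have := abs_sub_abs_le_abs_sub c (g y)
    rw [abs_sub_comm] at this
    linarith [abs_nonneg c]
  obtain ⟨M, hM⟩ := eventually_atTop.1 hev
  have hint : IntegrableOn (fun _ => |c|/2) (Set.Ici M) volume := by
    apply Integrable.mono' hg.abs.integrableOn aestronglyMeasurable_const
    filter_upwards [ae_restrict_mem measurableSet_Ici] with y hy
    rw [Real.norm_eq_abs, abs_of_nonneg (by positivity)]
    exact hM y hy
  rw [integrableOn_const_iff, enorm_eq_zero] at hint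
  rcases hint with h1 | h2
  · have : c = 0 := by
      have := abs_eq_zero.1 (by linarith [abs_nonneg c] : |c| = 0)
      exact this
    exact h this
  · simp [Real.volume_Ici] at h2

lemma abs_int_le {α : Type*} [MeasurableSpace α] (μ : Measure α) (f : α → ℝ) :
    |∫ x, f x ∂μ| ≤ ∫ x, |f x| ∂μ := by
  simpa [Real.norm_eq_abs] using norm_integral_le_integral_norm (μ := μ) f

lemma planeBound {F F1 F12 : ℝ × ℝ → ℝ}
    (hF : Continuous F) (hF1 : Continuous F1)
    (hd1 : ∀ p : ℝ × ℝ, HasDerivAt (fun t => F (t, p.2)) (F1 p) p.1)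
    (hd2 : ∀ p : ℝ × ℝ, HasDerivAt (fun s => F1 (p.1, s)) (F12 p) p.2)
    (hiF : Integrable F) (hiF1 : Integrable F1) (hiF12 : Integrable F12) :
    ∀ p : ℝ × ℝ, |F p| ≤ ∫ t in Set.Ioi p.1, (∫ s, |F12 (t, s)|) := by
  have hiF' : Integrable F ((volume : Measure ℝ).prod volume) := by
    rwa [← MeasureTheory.Measure.volume_eq_prod]
  have hiF1' : Integrable F1 ((volume : Measure ℝ).prod volume) := by
    rwa [← MeasureTheory.Measure.volume_eq_prod]
  have hiF12' : Integrable F12 ((volume : Measure ℝ).prod volume) := by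
    rwa [← MeasureTheory.Measure.volume_eq_prod]
  set G : ℝ → ℝ := fun t => ∫ s, |F12 (t, s)| with hGdef
  have hG : Integrable G := by
    have := hiF12'.integral_norm_prod_left
    simpa [Real.norm_eq_abs] using this
  have hGnn : ∀ t, 0 ≤ G t := fun t => integral_nonneg fun s => abs_nonneg _
  -- Step A: a.e. t, sup_s |F1 (t,s)| ≤ G t
  have hA : ∀ᵐ t : ℝ, ∀ s, |F1 (t, s)| ≤ G t := by
    filter_upwards [hiF1'.prod_right_ae, hiF12'.prod_right_ae] with t h1 h12
    intro s
    have hder : ∀ s, HasDerivAt (fun s => F1 (t, s)) (F12 (t, s)) s := fun s => hd2 (t, s)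
    have hlim := oneD_tendsto hder h12 s
    have hc := oneD_limit_zero h1 hlim
    have hrepr : F1 (t, s) = - ∫ u in Set.Ioi s, F12 (t, u) := by linarith
    rw [hrepr, abs_neg]
    calc |∫ u in Set.Ioi s, F12 (t, u)| ≤ ∫ u in Set.Ioi s, |F12 (t, u)| :=
          abs_int_le _ _
      _ ≤ ∫ u, |F12 (t, u)| := by
          apply setIntegral_le_integral h12.abs
          filter_upwards with u using abs_nonneg _
  -- every horizontal slice of F1 is integrable
  have hIb : ∀ b : ℝ, Integrable (fun t => F1 (t, b)) := by
    intro b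
    apply Integrable.mono' hG
      ((hF1.comp (continuous_id.prodMk continuous_const)).aestronglyMeasurable)
    filter_upwards [hA] with t ht
    rw [Real.norm_eq_abs]; exact ht b
  -- limit along horizontal lines
  have hLtend : ∀ b x : ℝ,
      Tendsto (fun t => F (t, b)) atTop (nhds (F (x, b) + ∫ t in Set.Ioi x, F1 (t, b))) :=
    fun b x => oneD_tendsto (fun t => hd1 (t, b)) (hIb b) x
  set L : ℝ → ℝ := fun b => F (0, b) + ∫ t in Set.Ioi 0, F1 (t, b) with hLdef
  have hLcont : Continuous L := by
    apply (hF.comp (continuous_const.prodMk continuous_id)).add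
    apply MeasureTheory.continuous_of_dominated
      (bound := G) (μ := volume.restrict (Set.Ioi (0:ℝ)))
    · exact fun b =>
        ((hF1.comp (continuous_id.prodMk continuous_const)).aestronglyMeasurable)
    · intro b
      apply ae_restrict_of_ae
      filter_upwards [hA] with t ht
      rw [Real.norm_eq_abs]; exact ht b
    · exact hG.restrict
    · filter_upwards with t
      exact hF1.comp (continuous_const.prodMk continuous_id)
  have hL0 : ∀ b, L b = 0 := by
    have hae : L =ᵐ[volume] (fun _ => (0:ℝ)) := by
      filter_upwards [hiF'.prod_left_ae] with b hb
      exact oneD_limit_zero hb (hLtend b 0)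
    have := (Continuous.ae_eq_iff_eq (μ := volume) hLcont continuous_const).1 hae
    intro b; exact congrFun this b
  intro p
  have h1 := hLtend p.2 p.1
  have h2 := hLtend p.2 0
  have hxL : F (p.1, p.2) + ∫ t in Set.Ioi p.1, F1 (t, p.2) = L p.2 :=
    tendsto_nhds_unique h1 h2
  rw [hL0 p.2] at hxL
  have hrepr : F p = - ∫ t in Set.Ioi p.1, F1 (t, p.2) := by
    rw [← Prod.mk.eta (p := p)] at *
    linarith
  rw [hrepr, abs_neg]
  calc |∫ t in Set.Ioi p.1, F1 (t, p.2)| ≤ ∫ t in Set.Ioi p.1, |F1 (t, p.2)| :=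
        abs_int_le _ _
    _ ≤ ∫ t in Set.Ioi p.1, G t := by
        apply integral_mono_ae ((hIb p.2).abs).integrableOn hG.integrableOn
        apply ae_restrict_of_ae
        filter_upwards [hA] with t ht using ht p.2

lemma line_hasDerivAt {E₁ : Type*} [NormedAddCommGroup E₁] [NormedSpace ℝ E₁]
    {z : E₁ → ℝ} (hz : Differentiable ℝ z) (c d : E₁) (t : ℝ) :
    HasDerivAt (fun t : ℝ => z (c + t • d)) (fderiv ℝ z (c + t • d) d) t := by
  have hline : HasDerivAt (fun t : ℝ => c + t • d) d t := by
    simpa using ((hasDerivAt_id t).smul_const d).const_add c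
  have h := ((hz _).hasFDerivAt.comp_hasDerivAt t hline)
  exact h

lemma euclBound (w : EuclideanSpace ℝ (Fin 2) → ℝ) (hw : ContDiff ℝ 2 w)
    (u v : EuclideanSpace ℝ (Fin 2))
    (J : ℝ × ℝ → EuclideanSpace ℝ (Fin 2))
    (hJmp : MeasurePreserving J volume volume)
    (hJemb : MeasurableEmbedding J) (hJcont : Continuous J)
    (hJ1 : ∀ a b : ℝ, J (a, b) = J (0, b) + a • u)
    (hJ2 : ∀ a b : ℝ, J (a, b) = J (a, 0) + b • v)
    (hw2 : MemLp w 2 volume)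
    (hu : MemLp (fun x => fderiv ℝ w x u) 2 volume)
    (hv : MemLp (fun x => fderiv ℝ w x v) 2 volume)
    (huv : MemLp (fun x => fderiv ℝ (fun y => fderiv ℝ w y u) x v) 2 volume) :
    ∃ G : ℝ → ℝ, Integrable G ∧ (∀ t, 0 ≤ G t) ∧
      ∀ a b : ℝ, (w (J (a, b)))^2 ≤ ∫ t in Set.Ioi a, G t := by
  set wu : EuclideanSpace ℝ (Fin 2) → ℝ := fun x => fderiv ℝ w x u with hwu_def
  set wv : EuclideanSpace ℝ (Fin 2) → ℝ := fun x => fderiv ℝ w x v with hwv_def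
  set wuv : EuclideanSpace ℝ (Fin 2) → ℝ := fun x => fderiv ℝ wu x v with hwuv_def
  have hdw : Differentiable ℝ w := hw.differentiable (by norm_num)
  have hfd1 : ContDiff ℝ 1 (fderiv ℝ w) := hw.fderiv_right (by norm_num)
  have hwu_cd : ContDiff ℝ 1 wu := hfd1.clm_apply contDiff_const
  have hwv_cd : ContDiff ℝ 1 wv := hfd1.clm_apply contDiff_const
  have hwu_diff : Differentiable ℝ wu := hwu_cd.differentiable (by norm_num)
  have hwuv_cont : Continuous wuv := by
    have : ContDiff ℝ 0 (fderiv ℝ wu) := hwu_cd.fderiv_right (by norm_num)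
    exact (this.clm_apply contDiff_const).continuous
  set F : ℝ × ℝ → ℝ := fun p => (w (J p))^2 with hF_def
  set F1 : ℝ × ℝ → ℝ := fun p => 2 * (w (J p) * wu (J p)) with hF1_def
  set F12 : ℝ × ℝ → ℝ := fun p => 2 * (wv (J p) * wu (J p) + w (J p) * wuv (J p))
    with hF12_def
  have hd1 : ∀ p : ℝ × ℝ, HasDerivAt (fun t => F (t, p.2)) (F1 p) p.1 := by
    intro p
    have hbase := line_hasDerivAt hdw (J (0, p.2)) u p.1
    have heq : (fun t : ℝ => w (J (0, p.2) + t • u)) = fun t => w (J (t, p.2)) := by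
      funext t; rw [hJ1 t p.2]
    rw [heq] at hbase
    have hsq := hbase.pow 2
    have : F1 p = 2 * w (J (p.1, p.2)) ^ (2 - 1) * fderiv ℝ w (J (0, p.2) + p.1 • u) u := by
      rw [← hJ1 p.1 p.2]
      simp only [hF1_def, hwu_def, pow_one]
      ring
    rw [this]
    exact hsq
  have hd2 : ∀ p : ℝ × ℝ, HasDerivAt (fun s => F1 (p.1, s)) (F12 p) p.2 := by
    intro p
    have hbw := line_hasDerivAt hdw (J (p.1, 0)) v p.2
    have hbwu := line_hasDerivAt hwu_diff (J (p.1, 0)) v p.2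
    have heq : ∀ s : ℝ, J (p.1, 0) + s • v = J (p.1, s) := fun s => (hJ2 p.1 s).symm
    simp only [heq] at hbw hbwu
    have hprod := (hbw.mul hbwu).const_mul (2:ℝ)
    have : F12 p = 2 * (fderiv ℝ w (J (p.1, p.2)) v * wu (J (p.1, p.2)) +
        w (J (p.1, p.2)) * fderiv ℝ wu (J (p.1, p.2)) v) := by
      simp only [hF12_def, hwv_def, hwuv_def]
    rw [this]
    exact hprod
  have hFc : Continuous F := ((hw.continuous.comp hJcont).pow 2)
  have hF1c : Continuous F1 :=
    (continuous_const.mul ((hw.continuous.comp hJcont).mul (hwu_cd.continuous.comp hJcont)))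
  have hiE_F : Integrable (fun x => (w x)^2) := hw2.integrable_sq
  have hiE_F1 : Integrable (fun x => 2 * (w x * wu x)) := (l2_mul_int hw2 hu).const_mul 2
  have hiE_F12 : Integrable (fun x => 2 * (wv x * wu x + w x * wuv x)) :=
    ((l2_mul_int hv hu).add (l2_mul_int hw2 huv)).const_mul 2
  have hiF : Integrable F := by
    rw [show F = (fun x => (w x)^2) ∘ J from rfl]
    exact (hJmp.integrable_comp_emb hJemb).2 hiE_F
  have hiF1 : Integrable F1 := by
    rw [show F1 = (fun x => 2 * (w x * wu x)) ∘ J from rfl]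
    exact (hJmp.integrable_comp_emb hJemb).2 hiE_F1
  have hiF12 : Integrable F12 := by
    rw [show F12 = (fun x => 2 * (wv x * wu x + w x * wuv x)) ∘ J from rfl]
    exact (hJmp.integrable_comp_emb hJemb).2 hiE_F12
  have hbound := planeBound hFc hF1c hd1 hd2 hiF hiF1 hiF12
  refine ⟨fun t => ∫ s, |F12 (t, s)|, ?_, fun t => integral_nonneg fun s => abs_nonneg _, ?_⟩
  · have hiF12' : Integrable F12 ((volume : Measure ℝ).prod volume) := by
      rwa [← MeasureTheory.Measure.volume_eq_prod]
    simpa [Real.norm_eq_abs] using hiF12'.integral_norm_prod_left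
  · intro a b
    have := hbound (a, b)
    rwa [show F (a, b) = (w (J (a, b)))^2 from rfl, abs_of_nonneg (sq_nonneg _)] at this

noncomputable def ιL : (ℝ × ℝ) ≃L[ℝ] EuclideanSpace ℝ (Fin 2) :=
  (ContinuousLinearEquiv.finTwoArrow ℝ ℝ).symm.trans
    (PiLp.continuousLinearEquiv 2 ℝ (fun _ : Fin 2 => ℝ)).symm

lemma ιL_apply (p : ℝ × ℝ) (i : Fin 2) : ιL p i = if i = 0 then p.1 else p.2 := by
  fin_cases i <;> rfl

noncomputable def mE : (ℝ × ℝ) ≃ᵐ EuclideanSpace ℝ (Fin 2) :=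
  (MeasurableEquiv.finTwoArrow.symm).trans (MeasurableEquiv.toLp 2 (Fin 2 → ℝ))

lemma mE_eq : ⇑mE = ⇑ιL := by
  funext p
  ext i
  rw [ιL_apply]
  fin_cases i <;>
    simp [mE, MeasurableEquiv.finTwoArrow, MeasurableEquiv.toLp] <;> rfl

lemma ιL_measurePreserving : MeasurePreserving (⇑ιL) volume volume := by
  rw [← mE_eq]
  exact ((EuclideanSpace.volume_preserving_symm_measurableEquiv_toLp (Fin 2)).symm).comp
    ((MeasureTheory.volume_preserving_finTwoArrow ℝ).symm MeasurableEquiv.finTwoArrow)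

lemma ιL_measurableEmbedding : MeasurableEmbedding (⇑ιL) := by
  rw [← mE_eq]; exact mE.measurableEmbedding

lemma tail_mono {G : ℝ → ℝ} (hG : Integrable G) (hnn : ∀ t, 0 ≤ G t) {a c : ℝ} (h : c ≤ a) :
    ∫ t in Set.Ioi a, G t ≤ ∫ t in Set.Ioi c, G t := by
  apply setIntegral_mono_set hG.integrableOn
  · filter_upwards with t using hnn t
  · exact HasSubset.Subset.eventuallyLE (Set.Ioi_subset_Ioi h)

lemma tail_nonneg {G : ℝ → ℝ} (hnn : ∀ t, 0 ≤ G t) (a : ℝ) :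
    0 ≤ ∫ t in Set.Ioi a, G t :=
  setIntegral_nonneg measurableSet_Ioi fun t _ => hnn t

lemma e0_eq : ιL (1, 0) = EuclideanSpace.single (0 : Fin 2) (1:ℝ) := by
  ext i; rw [ιL_apply]; fin_cases i <;> simp

lemma e1_eq : ιL (0, 1) = EuclideanSpace.single (1 : Fin 2) (1:ℝ) := by
  ext i; rw [ιL_apply]; fin_cases i <;> simp

/-- If `w : ℝ² → ℝ` is `C²` and `w`, both first partial derivatives of
`w`, and all second partial derivatives of `w` belong to `L²(ℝ²)`, then `w` tends to zero
uniformly at infinity: `lim_{R→∞} sup_{|x|=R} |w(x)| = 0`. -/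
theorem W22_uniform_decay
    (w : EuclideanSpace ℝ (Fin 2) → ℝ)
    (hw : ContDiff ℝ 2 w)
    (hw2 : MemLp w 2 volume)
    (hw1 : ∀ i : Fin 2,
      MemLp (fun x => fderiv ℝ w x (EuclideanSpace.single i 1)) 2 volume)
    (hw11 : ∀ i j : Fin 2,
      MemLp (fun x =>
        fderiv ℝ (fun y => fderiv ℝ w y (EuclideanSpace.single i 1)) x
          (EuclideanSpace.single j 1)) 2 volume) :
    Tendsto (fun R : ℝ => ⨆ x : Metric.sphere (0 : EuclideanSpace ℝ (Fin 2)) R, |w x|)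
      atTop (nhds 0) := by
  set e0 : EuclideanSpace ℝ (Fin 2) := EuclideanSpace.single (0 : Fin 2) (1:ℝ) with he0
  set e1 : EuclideanSpace ℝ (Fin 2) := EuclideanSpace.single (1 : Fin 2) (1:ℝ) with he1
  -- negated MemLp facts
  have hw1n : ∀ i : Fin 2, MemLp (fun x => fderiv ℝ w x (-(EuclideanSpace.single i 1))) 2 volume := by
    intro i
    simp only [map_neg]
    exact (hw1 i).neg
  have hw11n : ∀ i j : Fin 2, MemLp (fun x =>
      fderiv ℝ (fun y => fderiv ℝ w y (-(EuclideanSpace.single i 1))) x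
        (EuclideanSpace.single j 1)) 2 volume := by
    intro i j
    have hfun : (fun y => fderiv ℝ w y (-(EuclideanSpace.single i 1)))
        = fun y => -(fderiv ℝ w y (EuclideanSpace.single i 1)) := by
      funext y; simp [map_neg]
    simp only [hfun, fderiv_fun_neg, ContinuousLinearMap.neg_apply]
    exact (hw11 i j).neg
  have key : ∀ (q r : ℝ × ℝ) (c : ℝ), ιL (q + c • r) = ιL q + c • ιL r := by
    intro q r c
    rw [map_add, _root_.map_smul]
  -- measure-preserving/embedding data for the four maps
  have negmp : MeasurePreserving (fun p : ℝ × ℝ => (-p.1, p.2)) volume volume :=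
    (Measure.measurePreserving_neg (volume : Measure ℝ)).prod (MeasurePreserving.id volume)
  have negemb : MeasurableEmbedding (fun p : ℝ × ℝ => (-p.1, p.2)) := by
    have : MeasurableEmbedding (Prod.map (fun t : ℝ => -t) (id : ℝ → ℝ)) :=
      (MeasurableEquiv.neg ℝ).measurableEmbedding.prodMap (MeasurableEquiv.refl ℝ).measurableEmbedding
    exact this
  have swapmp : MeasurePreserving (Prod.swap : ℝ × ℝ → ℝ × ℝ) volume volume :=
    Measure.measurePreserving_swap
  have swapemb : MeasurableEmbedding (Prod.swap : ℝ × ℝ → ℝ × ℝ) :=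
    MeasurableEquiv.prodComm.measurableEmbedding
  -- case 1 : J₁ = ιL, u = e0, v = e1
  obtain ⟨G₁, hG₁i, hG₁nn, hB₁⟩ := euclBound w hw e0 e1 (⇑ιL)
    ιL_measurePreserving ιL_measurableEmbedding ιL.continuous
    (by intro a b; rw [he0, ← e0_eq, ← key]; congr 1; simp [Prod.ext_iff])
    (by intro a b; rw [he1, ← e1_eq, ← key]; congr 1; simp [Prod.ext_iff])
    hw2 (hw1 0) (hw1 1) (hw11 0 1)
  -- case 2 : J₂ p = ιL (-p.1, p.2), u = -e0, v = e1
  obtain ⟨G₂, hG₂i, hG₂nn, hB₂⟩ := euclBound w hw (-e0) e1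
    (fun p : ℝ × ℝ => ιL (-p.1, p.2))
    (ιL_measurePreserving.comp negmp) (ιL_measurableEmbedding.comp negemb)
    (ιL.continuous.comp (continuous_fst.neg.prodMk continuous_snd))
    (by intro a b
        show ιL (-a, b) = ιL (-0, b) + a • (-e0)
        rw [he0, ← e0_eq, neg_zero, smul_neg, ← neg_smul, ← key]
        congr 1
        simp [Prod.ext_iff])
    (by intro a b
        show ιL (-a, b) = ιL (-a, 0) + b • e1
        rw [he1, ← e1_eq, ← key]
        congr 1
        simp [Prod.ext_iff])
    hw2 (by rw [he0]; exact hw1n 0) (hw1 1) (by rw [he0, he1]; exact hw11n 0 1)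
  -- case 3 : J₃ p = ιL (p.2, p.1), u = e1, v = e0
  obtain ⟨G₃, hG₃i, hG₃nn, hB₃⟩ := euclBound w hw e1 e0
    (fun p : ℝ × ℝ => ιL (p.2, p.1))
    (ιL_measurePreserving.comp swapmp) (ιL_measurableEmbedding.comp swapemb)
    (ιL.continuous.comp (continuous_snd.prodMk continuous_fst))
    (by intro a b
        show ιL (b, a) = ιL (b, 0) + a • e1
        rw [he1, ← e1_eq, ← key]
        congr 1
        simp [Prod.ext_iff])
    (by intro a b
        show ιL (b, a) = ιL (0, a) + b • e0
        rw [he0, ← e0_eq, ← key]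
        congr 1
        simp [Prod.ext_iff])
    hw2 (hw1 1) (hw1 0) (hw11 1 0)
  -- case 4 : J₄ p = ιL (p.2, -p.1), u = -e1, v = e0
  obtain ⟨G₄, hG₄i, hG₄nn, hB₄⟩ := euclBound w hw (-e1) e0
    (fun p : ℝ × ℝ => ιL (p.2, -p.1))
    ((ιL_measurePreserving.comp swapmp).comp negmp)
    ((ιL_measurableEmbedding.comp swapemb).comp negemb)
    (ιL.continuous.comp (continuous_snd.prodMk continuous_fst.neg))
    (by intro a b
        show ιL (b, -a) = ιL (b, -0) + a • (-e1)
        rw [he1, ← e1_eq, neg_zero, smul_neg, ← neg_smul, ← key]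
        congr 1
        simp [Prod.ext_iff])
    (by intro a b
        show ιL (b, -a) = ιL (0, -a) + b • e0
        rw [he0, ← e0_eq, ← key]
        congr 1
        simp [Prod.ext_iff])
    hw2 (by rw [he1]; exact hw1n 1) (hw1 0) (by rw [he0, he1]; exact hw11n 1 0)
  -- the decaying bound
  set B : ℝ → ℝ := fun R =>
    (∫ t in Set.Ioi (R/2), G₁ t) + (∫ t in Set.Ioi (R/2), G₂ t) +
    (∫ t in Set.Ioi (R/2), G₃ t) + (∫ t in Set.Ioi (R/2), G₄ t) with hBdef
  have hhalf : Tendsto (fun R : ℝ => R/2) atTop atTop :=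
    Tendsto.atTop_div_const (by norm_num) tendsto_id
  have hBtend : Tendsto B atTop (nhds 0) := by
    have h1 := (tail_tendsto_zero hG₁i).comp hhalf
    have h2 := (tail_tendsto_zero hG₂i).comp hhalf
    have h3 := (tail_tendsto_zero hG₃i).comp hhalf
    have h4 := (tail_tendsto_zero hG₄i).comp hhalf
    have := ((h1.add h2).add h3).add h4
    simpa using this
  have hBnn : ∀ R, 0 ≤ B R := by
    intro R
    have := tail_nonneg hG₁nn (R/2)
    have := tail_nonneg hG₂nn (R/2)
    have := tail_nonneg hG₃nn (R/2)
    have := tail_nonneg hG₄nn (R/2)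
    rw [hBdef]; dsimp only; linarith
  -- pointwise bound on the sphere
  have hsphere : ∀ R : ℝ, ∀ x : Metric.sphere (0 : EuclideanSpace ℝ (Fin 2)) R,
      (w x)^2 ≤ B R := by
    rintro R ⟨x, hx⟩
    rw [Metric.mem_sphere, dist_zero_right] at hx
    set a : ℝ := (ιL.symm x).1 with ha
    set b : ℝ := (ιL.symm x).2 with hb
    have hxab : x = ιL (a, b) := by rw [ha, hb]; simp
    have hR2 : a^2 + b^2 = R^2 := by
      have hnx := EuclideanSpace.norm_eq x
      have h0 : x 0 = a := by rw [hxab, ιL_apply]; simp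
      have h1 : x 1 = b := by rw [hxab, ιL_apply]; simp
      rw [Fin.sum_univ_two, h0, h1, hx] at hnx
      have h2 : R^2 = (Real.sqrt (‖a‖^2 + ‖b‖^2))^2 := by rw [← hnx]
      rw [Real.sq_sqrt (by positivity)] at h2
      simp only [Real.norm_eq_abs, sq_abs] at h2
      linarith
    have hRnn : 0 ≤ R := hx ▸ norm_nonneg x
    have hcases : R/2 ≤ a ∨ R/2 ≤ -a ∨ R/2 ≤ b ∨ R/2 ≤ -b := by
      by_contra hcon
      push_neg at hcon
      obtain ⟨c1, c2, c3, c4⟩ := hcon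
      nlinarith [sq_nonneg a, sq_nonneg b, sq_nonneg R, sq_nonneg (a+b), sq_nonneg (a-b)]
    show (w x)^2 ≤ B R
    rcases hcases with h | h | h | h
    · have := hB₁ a b
      rw [← hxab] at this
      refine this.trans ?_
      have hm := tail_mono hG₁i hG₁nn h
      have := tail_nonneg hG₂nn (R/2)
      have := tail_nonneg hG₃nn (R/2)
      have := tail_nonneg hG₄nn (R/2)
      rw [hBdef]; dsimp only; linarith
    · have := hB₂ (-a) b
      simp only [neg_neg] at this
      rw [← hxab] at this
      refine this.trans ?_
      have hm := tail_mono hG₂i hG₂nn h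
      have := tail_nonneg hG₁nn (R/2)
      have := tail_nonneg hG₃nn (R/2)
      have := tail_nonneg hG₄nn (R/2)
      rw [hBdef]; dsimp only; linarith
    · have := hB₃ b a
      rw [← hxab] at this
      refine this.trans ?_
      have hm := tail_mono hG₃i hG₃nn h
      have := tail_nonneg hG₁nn (R/2)
      have := tail_nonneg hG₂nn (R/2)
      have := tail_nonneg hG₄nn (R/2)
      rw [hBdef]; dsimp only; linarith
    · have := hB₄ (-b) a
      simp only [neg_neg] at this
      rw [← hxab] at this
      refine this.trans ?_
      have hm := tail_mono hG₄i hG₄nn h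
      have := tail_nonneg hG₁nn (R/2)
      have := tail_nonneg hG₂nn (R/2)
      have := tail_nonneg hG₃nn (R/2)
      rw [hBdef]; dsimp only; linarith
  -- squeeze
  have hsup : ∀ R : ℝ,
      (⨆ x : Metric.sphere (0 : EuclideanSpace ℝ (Fin 2)) R, |w x|) ≤ Real.sqrt (B R) := by
    intro R
    apply Real.iSup_le _ (Real.sqrt_nonneg _)
    intro x
    rw [← Real.sqrt_sq_eq_abs]
    exact Real.sqrt_le_sqrt (hsphere R x)
  have hsqrt : Tendsto (fun R => Real.sqrt (B R)) atTop (nhds 0) := by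
    have := (Real.continuous_sqrt.tendsto 0).comp hBtend
    simpa [Function.comp_def] using this
  exact squeeze_zero (fun R => Real.iSup_nonneg fun x => abs_nonneg _) hsup hsqrt
end

section
/- Let R > 0 and σ > 0. Let h : ℝ² → ℝ be continuous on the closed exterior region {x ∈ ℝ² : |x| ≥ R}, twice continuously differentiable on the open region {|x| > R}, and suppose: (i) Δh(x) ≥ σ²·h(x) for all |x| > R; (ii) h(x) ≤ 0 for all |x| = R; and (iii) h(x) → 0 as |x| → ∞. Then h(x) ≤ 0 for all x with |x| ≥ R. -/
open Filter

/-- At a local maximum of a function differentiable near the point, with the directional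
derivative map differentiable at the point, the second directional derivative is nonpositive. -/
lemma second_dir_deriv_nonpos_of_isLocalMax
    {E : Type*} [NormedAddCommGroup E] [NormedSpace ℝ E] {h : E → ℝ} {z v : E}
    (hd : ∀ᶠ y in nhds z, DifferentiableAt ℝ h y)
    (hF : DifferentiableAt ℝ (fun y => fderiv ℝ h y v) z)
    (hmax : IsLocalMax h z) :
    fderiv ℝ (fun y => fderiv ℝ h y v) z v ≤ 0 := by
  by_contra hc
  push_neg at hc
  set F : E → ℝ := fun y => fderiv ℝ h y v with hFdef
  set c : ℝ := fderiv ℝ F z v with hcdef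
  have hL : ∀ t : ℝ, HasDerivAt (fun s : ℝ => z + s • v) v t := fun t => by
    simpa using ((hasDerivAt_id t).smul_const v).const_add z
  set φ : ℝ → ℝ := fun t => F (z + t • v) with hφdef
  have hφ0 : φ 0 = 0 := by
    simp [hφdef, hFdef, hmax.fderiv_eq_zero]
  have hφderiv : HasDerivAt φ c 0 := by
    have h0 : HasFDerivAt F (fderiv ℝ F z) (z + (0:ℝ) • v) := by
      simpa using hF.hasFDerivAt
    exact h0.comp_hasDerivAt 0 (hL 0)
  have hslope : Tendsto (slope φ 0) (nhdsWithin 0 {(0:ℝ)}ᶜ) (nhds c) :=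
    hasDerivAt_iff_tendsto_slope.mp hφderiv
  have hslope' : ∀ᶠ t in nhdsWithin (0:ℝ) (Set.Ioi 0), 0 < slope φ 0 t :=
    (hslope.mono_left (nhdsWithin_mono 0 (fun t ht => by
      simp only [Set.mem_compl_iff, Set.mem_singleton_iff]
      exact ne_of_gt ht))).eventually (eventually_gt_nhds hc)
  have hcont : Tendsto (fun t : ℝ => z + t • v) (nhds 0) (nhds z) := by
    have hco : Continuous (fun t : ℝ => z + t • v) :=
      continuous_const.add (continuous_id.smul continuous_const)
    simpa using hco.tendsto 0
  have hev : ∀ᶠ t in nhdsWithin (0:ℝ) (Set.Ioi 0),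
      (h (z + t • v) ≤ h z ∧ DifferentiableAt ℝ h (z + t • v)) ∧ 0 < slope φ 0 t :=
    ((hcont.eventually (hmax.and hd)).filter_mono nhdsWithin_le_nhds).and hslope'
  obtain ⟨u, hu, hIoo⟩ := mem_nhdsGT_iff_exists_Ioo_subset.mp hev
  have hu0 : (0:ℝ) < u := hu
  set δ : ℝ := u / 2 with hδdef
  have hδ0 : (0:ℝ) < δ := by positivity
  have hδu : δ < u := by simp [hδdef]; linarith
  set g : ℝ → ℝ := fun t => h (z + t • v) with hgdef
  have hgderiv : ∀ t : ℝ, DifferentiableAt ℝ h (z + t • v) → HasDerivAt g (φ t) t := by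
    intro t ht
    exact ht.hasFDerivAt.comp_hasDerivAt t (hL t)
  have hgcont : ContinuousOn g (Set.Icc 0 δ) := by
    intro t ht
    rcases eq_or_lt_of_le ht.1 with h0 | h0
    · have : DifferentiableAt ℝ h (z + t • v) := by
        rw [← h0]; simpa using hd.self_of_nhds
      exact ((hgderiv t this).differentiableAt.continuousAt).continuousWithinAt
    · have htI : t ∈ Set.Ioo (0:ℝ) u := ⟨h0, lt_of_le_of_lt ht.2 hδu⟩
      exact ((hgderiv t (hIoo htI).1.2).differentiableAt.continuousAt).continuousWithinAt
  have hmono : StrictMonoOn g (Set.Icc 0 δ) := by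
    apply strictMonoOn_of_deriv_pos (convex_Icc 0 δ) hgcont
    intro t ht
    rw [interior_Icc] at ht
    have htI : t ∈ Set.Ioo (0:ℝ) u := ⟨ht.1, lt_trans ht.2 hδu⟩
    obtain ⟨⟨_, hdiff⟩, hsl⟩ := hIoo htI
    rw [(hgderiv t hdiff).deriv]
    have hsl' : 0 < (t - 0)⁻¹ * (φ t - φ 0) := hsl
    rw [hφ0, sub_zero, sub_zero] at hsl'
    have := mul_pos ht.1 hsl'
    rwa [mul_inv_cancel_left₀ (ne_of_gt ht.1)] at this
  have hlt : g 0 < g δ :=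
    hmono (Set.left_mem_Icc.mpr hδ0.le) (Set.right_mem_Icc.mpr hδ0.le) hδ0
  have hg0 : g 0 = h z := by simp [hgdef]
  have hgδ : g δ ≤ h z := (hIoo ⟨hδ0, hδu⟩).1.1
  rw [hg0] at hlt
  exact absurd hgδ (not_le.mpr hlt)

/-- The Laplacian `Δf = ∂₁²f + ∂₂²f` of a function on `ℝ²`, expressed through
iterated directional derivatives along the standard basis. -/
noncomputable def lap (f : EuclideanSpace ℝ (Fin 2) → ℝ) (x : EuclideanSpace ℝ (Fin 2)) : ℝ :=
  ∑ i : Fin 2,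
    fderiv ℝ (fun y => fderiv ℝ f y (EuclideanSpace.single i 1)) x (EuclideanSpace.single i 1)

/-- maximum-principle comparison on an exterior region. Let `R, σ > 0`
and let `h` be continuous on `{|x| ≥ R}`, `C²` on `{|x| > R}`, with `Δh ≥ σ²h` there,
`h ≤ 0` on `{|x| = R}`, and `h(x) → 0` as `|x| → ∞`. Then `h ≤ 0` on `{|x| ≥ R}`. -/
theorem exterior_maximum_principle (R σ : ℝ) (hR : 0 < R) (hσ : 0 < σ)
    (h : EuclideanSpace ℝ (Fin 2) → ℝ)
    (hcont : ContinuousOn h {x | R ≤ ‖x‖})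
    (hC2 : ContDiffOn ℝ 2 h {x | R < ‖x‖})
    (hsub : ∀ x, R < ‖x‖ → σ ^ 2 * h x ≤ lap h x)
    (hbdry : ∀ x, ‖x‖ = R → h x ≤ 0)
    (hlim : Tendsto h (cocompact (EuclideanSpace ℝ (Fin 2))) (nhds 0)) :
    ∀ x, R ≤ ‖x‖ → h x ≤ 0 := by
  by_contra hcon
  push_neg at hcon
  obtain ⟨x₀, hx₀R, hx₀pos⟩ := hcon
  set ε : ℝ := h x₀ with hεdef
  -- outside a compact set, h < ε
  have hev : ∀ᶠ x in cocompact (EuclideanSpace ℝ (Fin 2)), h x < ε :=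
    hlim.eventually (eventually_lt_nhds hx₀pos)
  obtain ⟨K, hKcomp, hKsub⟩ := mem_cocompact.mp hev
  obtain ⟨M₀, hM₀⟩ := hKcomp.isBounded.subset_closedBall 0
  set M : ℝ := max M₀ ‖x₀‖ with hMdef
  have hfar : ∀ x : EuclideanSpace ℝ (Fin 2), M < ‖x‖ → h x < ε := by
    intro x hx
    apply hKsub
    intro hxK
    have := hM₀ hxK
    rw [Metric.mem_closedBall, dist_zero_right] at this
    have : ‖x‖ ≤ M := le_trans this (le_max_left _ _)
    linarith
  -- compact annulus
  set A : Set (EuclideanSpace ℝ (Fin 2)) := {x | R ≤ ‖x‖ ∧ ‖x‖ ≤ M} with hAdef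
  have hAcomp : IsCompact A := by
    have h1 : A = Metric.closedBall 0 M ∩ {x | R ≤ ‖x‖} := by
      ext x
      simp [hAdef, Metric.mem_closedBall, dist_zero_right, and_comm]
    rw [h1]
    apply (isCompact_closedBall 0 M).inter_right
    have : {x : EuclideanSpace ℝ (Fin 2) | R ≤ ‖x‖} = (Metric.ball 0 R)ᶜ := by
      ext x; simp [Metric.mem_ball, dist_zero_right, not_lt]
    rw [this]
    exact Metric.isOpen_ball.isClosed_compl
  have hx₀A : x₀ ∈ A := ⟨hx₀R, le_max_right _ _⟩
  have hAsub : A ⊆ {x | R ≤ ‖x‖} := fun x hx => hx.1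
  obtain ⟨z, hzA, hzmax⟩ := hAcomp.exists_isMaxOn ⟨x₀, hx₀A⟩ (hcont.mono hAsub)
  have hzε : ε ≤ h z := hzmax hx₀A
  have hzpos : 0 < h z := lt_of_lt_of_le hx₀pos hzε
  have hzR : R < ‖z‖ := by
    rcases lt_or_eq_of_le hzA.1 with h1 | h1
    · exact h1
    · exact absurd (hbdry z h1.symm) (not_le.mpr hzpos)
  -- z is a global max on the exterior region
  have hglobal : ∀ x : EuclideanSpace ℝ (Fin 2), R ≤ ‖x‖ → h x ≤ h z := by
    intro x hx
    rcases le_or_gt ‖x‖ M with h1 | h1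
    · exact hzmax ⟨hx, h1⟩
    · exact le_trans (hfar x h1).le hzε
  have hopen : IsOpen {x : EuclideanSpace ℝ (Fin 2) | R < ‖x‖} :=
    isOpen_lt continuous_const continuous_norm
  have hmemnhds : {x : EuclideanSpace ℝ (Fin 2) | R < ‖x‖} ∈ nhds z :=
    hopen.mem_nhds hzR
  have hlocmax : IsLocalMax h z := by
    filter_upwards [hmemnhds] with x hx
    exact hglobal x hx.le
  -- differentiability near z
  have hd : ∀ᶠ y in nhds z, DifferentiableAt ℝ h y := by
    filter_upwards [hmemnhds] with y hy
    exact ((hC2.contDiffAt (hopen.mem_nhds hy)).differentiableAt (by norm_num))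
  have hC2z : ContDiffAt ℝ 2 h z := hC2.contDiffAt hmemnhds
  have hF : ∀ v : EuclideanSpace ℝ (Fin 2),
      DifferentiableAt ℝ (fun y => fderiv ℝ h y v) z := by
    intro v
    have h1 : ContDiffAt ℝ 1 (fderiv ℝ h) z := hC2z.fderiv_right (by norm_num)
    have h2 : DifferentiableAt ℝ (fderiv ℝ h) z := h1.differentiableAt (by norm_num)
    exact (ContinuousLinearMap.apply ℝ ℝ v).differentiableAt.comp z h2
  -- each second directional derivative is nonpositive
  have hlap : lap h z ≤ 0 := by
    apply Finset.sum_nonpos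
    intro i _
    exact second_dir_deriv_nonpos_of_isLocalMax hd (hF _) hlocmax
  have := hsub z hzR
  nlinarith [sq_nonneg σ, mul_pos (pow_pos hσ 2) hzpos]
end

section
/- Let p > 0 and q > 0 with p ≠ q, let K = (1/p)·[[p+q, p−q],[p−q, p+q]] with entries k_ij, and set λ₀ = 4·min{2, 2q/p}. Let R₀ > 0 and let v₁, v₂ : ℝ² → ℝ be C² on {|x| > R₀}, with v₁(x) → 0 and v₂(x) → 0 as |x| → ∞, satisfying for all |x| > R₀ and i = 1, 2: Δv_i = 2k_{i1}v₁ + 2k_{i2}v₂ + 2k_{i1}(e^{v₁} − v₁ − 1) + 2k_{i2}(e^{v₂} − v₂ − 1). Then for every ε ∈ (0,1) there exist a constant C_ε > 0 and a radius R ≥ R₀ such that v₁(x)² + v₂(x)² ≤ C_ε·e^{−(1−ε)·√λ₀·|x|} for all |x| ≥ R. -/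
set_option maxHeartbeats 1000000

open Filter

section Helpers

variable {E : Type*} [NormedAddCommGroup E] [NormedSpace ℝ E]

/-- second directional derivative via 1-D restriction -/
lemma second_dir_deriv (f : E → ℝ) (x e : E) (hf : ContDiffAt ℝ 2 f x) :
    fderiv ℝ (fun y => fderiv ℝ f y e) x e
      = deriv (deriv (fun t : ℝ => f (x + t • e))) 0 := by
  have hline : ∀ t : ℝ, HasDerivAt (fun s : ℝ => x + s • e) e t := by
    intro t
    simpa using ((hasDerivAt_id t).smul_const e).const_add x
  have hcont : Continuous (fun t : ℝ => x + t • e) := by fun_prop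
  have hev : ∀ᶠ y in nhds x, ContDiffAt ℝ 2 f y := hf.eventually (by simp)
  have hev0 : ∀ᶠ t : ℝ in nhds 0, ContDiffAt ℝ 2 f (x + t • e) := by
    have : Tendsto (fun t : ℝ => x + t • e) (nhds 0) (nhds x) := by
      simpa using (hcont.tendsto 0)
    exact this.eventually hev
  -- Step A
  have hA : ∀ᶠ t : ℝ in nhds 0,
      deriv (fun s : ℝ => f (x + s • e)) t = fderiv ℝ f (x + t • e) e := by
    filter_upwards [hev0] with t ht
    have hd : DifferentiableAt ℝ f (x + t • e) := ht.differentiableAt two_ne_zero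
    exact (hd.hasFDerivAt.comp_hasDerivAt t (hline t)).deriv
  -- Step B
  have hFd : DifferentiableAt ℝ (fun y => fderiv ℝ f y e) x := by
    have h1 : DifferentiableAt ℝ (fderiv ℝ f) x :=
      (hf.fderiv_right (m := 1) (by norm_num)).differentiableAt one_ne_zero
    exact h1.clm_apply (differentiableAt_const e)
  have hB : HasDerivAt (fun t : ℝ => fderiv ℝ f (x + t • e) e)
      (fderiv ℝ (fun y => fderiv ℝ f y e) x e) 0 := by
    have hFd' : HasFDerivAt (fun y => fderiv ℝ f y e)
        (fderiv ℝ (fun y => fderiv ℝ f y e) x) ((0:ℝ) • e + x) := by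
      simpa using hFd.hasFDerivAt
    have hl : HasDerivAt (fun s : ℝ => s • e + x) e 0 := by
      simpa using ((hasDerivAt_id (0:ℝ)).smul_const e).add_const x
    have := hFd'.comp_hasDerivAt 0 hl
    simp only [add_comm] at this ⊢
    convert this using 2
    all_goals rfl
  rw [Filter.EventuallyEq.deriv_eq hA, hB.deriv]



lemma contDiffAt_line (f : E → ℝ) (x e : E) (hf : ContDiffAt ℝ 2 f x) :
    ContDiffAt ℝ 2 (fun t : ℝ => f (x + t • e)) 0 := by
  have hl : ContDiff ℝ 2 (fun t : ℝ => x + t • e) :=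
    contDiff_const.add (contDiff_id.smul contDiff_const)
  have hf' : ContDiffAt ℝ 2 f ((fun t : ℝ => x + t • e) 0) := by simpa using hf
  exact hf'.comp 0 hl.contDiffAt

/-- 1-D second derivative test at a local max. -/
lemma deriv2_nonpos_of_isLocalMax {g : ℝ → ℝ} (hg : ContDiffAt ℝ 2 g 0)
    (hmax : IsLocalMax g 0) : deriv (deriv g) 0 ≤ 0 := by
  by_contra hpos
  push_neg at hpos
  have h1 : deriv g 0 = 0 :=
    hmax.deriv_eq_zero
  -- deriv g is differentiable at 0 with positive derivative
  have hdg : ContDiffAt ℝ 1 (deriv g) 0 := by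
    have h2 : ContDiffAt ℝ 1 (fun y => fderiv ℝ g y 1) 0 :=
      (hg.fderiv_right (m := 1) (by norm_num)).clm_apply contDiffAt_const
    have : deriv g = fun y => fderiv ℝ g y 1 := by
      funext y; rw [fderiv_apply_one_eq_deriv]
    rw [this]; exact h2
  have hdd : HasDerivAt (deriv g) (deriv (deriv g) 0) 0 :=
    ((hdg.differentiableAt one_ne_zero)).hasDerivAt
  -- slope of deriv g near 0 is positive on the right
  have hslope : ∀ᶠ t in nhdsWithin (0:ℝ) (Set.Ioi 0), 0 < deriv g t := by
    have := hdd.hasDerivWithinAt (s := Set.Ioi (0:ℝ))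
    have htend : Tendsto (slope (deriv g) 0)
        (nhdsWithin 0 (Set.Ioi 0)) (nhds (deriv (deriv g) 0)) := by
      have h3 := hdd
      rw [hasDerivAt_iff_tendsto_slope] at h3
      have hsub : nhdsWithin (0:ℝ) (Set.Ioi 0) ≤ nhdsWithin 0 {(0:ℝ)}ᶜ :=
        nhdsWithin_mono 0 (by intro t ht; simpa using ne_of_gt ht)
      exact h3.mono_left hsub
    have hev := htend.eventually (eventually_gt_nhds hpos)
    filter_upwards [hev, self_mem_nhdsWithin] with t ht ht'
    have ht0 : (0:ℝ) < t := ht'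
    rw [slope_def_field, h1] at ht
    have : 0 < (deriv g t - 0) / (t - 0) := by simpa [div_eq_inv_mul] using ht
    rw [sub_zero, sub_zero] at this
    rcases div_pos_iff.1 this with ⟨h, _⟩ | ⟨_, h⟩
    · exact h
    · linarith
  -- g is differentiable near 0 and continuous near 0
  have hev : ∀ᶠ t in nhds (0:ℝ), ContDiffAt ℝ 2 g t := hg.eventually (by simp)
  obtain ⟨δ₁, hδ₁, hδ₁'⟩ := Metric.eventually_nhds_iff.1 hev
  rw [eventually_nhdsWithin_iff] at hslope
  obtain ⟨δ₂, hδ₂, hδ₂'⟩ := Metric.eventually_nhds_iff.1 hslope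
  obtain ⟨δ₃, hδ₃, hδ₃'⟩ := Metric.eventually_nhds_iff.1 hmax
  set δ := min δ₁ (min δ₂ δ₃) with hδdef
  have hδ : 0 < δ := by positivity
  have hmono : StrictMonoOn g (Set.Icc 0 (δ/2)) := by
    apply strictMonoOn_of_deriv_pos (convex_Icc _ _)
    · apply ContinuousOn.mono (s := Metric.ball (0:ℝ) δ₁)
      · intro t ht
        exact ((hδ₁' (by simpa [Real.dist_eq] using ht)).continuousAt).continuousWithinAt
      · intro t ht
        simp only [Set.mem_Icc] at ht
        simp only [Metric.mem_ball, Real.dist_eq, sub_zero]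
        rw [abs_of_nonneg ht.1]
        calc t ≤ δ/2 := ht.2
          _ < δ := by linarith
          _ ≤ δ₁ := min_le_left _ _
    · intro t ht
      rw [interior_Icc, Set.mem_Ioo] at ht
      apply hδ₂'
      · simp only [Real.dist_eq, sub_zero]
        rw [abs_of_pos ht.1]
        calc t < δ/2 := ht.2
          _ < δ := by linarith
          _ ≤ δ₂ := le_trans (min_le_right _ _) (min_le_left _ _)
      · exact ht.1
  have hlt : g 0 < g (δ/2) := hmono (by simp; positivity) (by constructor <;> linarith) (by linarith)
  have : g (δ/2) ≤ g 0 := by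
    apply hδ₃'
    simp only [Real.dist_eq, sub_zero, abs_of_pos (by linarith : (0:ℝ) < δ/2)]
    calc δ/2 < δ := by linarith
      _ ≤ δ₃ := le_trans (min_le_right _ _) (min_le_right _ _)
  linarith





lemma lap_nonpos_of_isLocalMax {f : EuclideanSpace ℝ (Fin 2) → ℝ}
    {x : EuclideanSpace ℝ (Fin 2)} (hf : ContDiffAt ℝ 2 f x) (hmax : IsLocalMax f x) :
    lap f x ≤ 0 := by
  unfold lap
  apply Finset.sum_nonpos
  intro i _
  rw [second_dir_deriv f x _ hf]
  apply deriv2_nonpos_of_isLocalMax (contDiffAt_line f x _ hf)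
  have hcont : ContinuousAt (fun t : ℝ => x + t • EuclideanSpace.single i 1) 0 := by fun_prop
  have : Tendsto (fun t : ℝ => x + t • EuclideanSpace.single i 1) (nhds 0) (nhds x) := by
    simpa using hcont.tendsto
  have hev : ∀ᶠ t : ℝ in nhds 0, f (x + t • EuclideanSpace.single i 1) ≤ f x :=
    this.eventually hmax
  have h0 : f (x + (0:ℝ) • EuclideanSpace.single i 1) = f x := by simp
  refine hev.mono fun t ht => ?_
  simpa using le_trans ht h0.symm.le


/-- second derivative of `t ↦ C·exp(-μ·√(s+(c+t)²))` at `0`. -/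
lemma barrier_oneD (C μ s c : ℝ) (hs : 0 ≤ s) (hpos : 0 < s + c^2) :
    deriv (deriv (fun t : ℝ => C * Real.exp (-μ * Real.sqrt (s + (c + t)^2)))) 0
      = C * Real.exp (-μ * Real.sqrt (s + c^2)) *
          (μ^2 * c^2 / (s + c^2) - μ * s / (Real.sqrt (s + c^2))^3) := by
  set r : ℝ → ℝ := fun t => Real.sqrt (s + (c + t)^2) with hrdef
  set t₀ : ℝ := (s + c^2) / (2 * (|c| + 1)) with ht₀def
  have ht₀ : 0 < t₀ := by positivity
  have hupos : ∀ t : ℝ, |t| < t₀ → 0 < s + (c + t)^2 := by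
    intro t ht
    have h1 : 2 * |c| * |t| < s + c^2 := by
      have h2 : |t| < (s + c^2) / (2 * (|c| + 1)) := ht
      have h4 : |t| * (2 * (|c| + 1)) < s + c^2 :=
        (lt_div_iff₀ (by positivity)).1 h2
      nlinarith [abs_nonneg c, abs_nonneg t]
    have h3 : -(2 * |c| * |t|) ≤ 2 * c * t := by
      have := abs_mul c t
      have := neg_abs_le (c * t)
      nlinarith [abs_mul c t, neg_abs_le (c * t)]
    nlinarith [sq_nonneg t]
  have hrpos : ∀ t : ℝ, |t| < t₀ → 0 < r t := fun t ht => Real.sqrt_pos.2 (hupos t ht)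
  have hr : ∀ t : ℝ, |t| < t₀ → HasDerivAt r ((c + t) / r t) t := by
    intro t ht
    have hu : HasDerivAt (fun t : ℝ => s + (c + t)^2) (2 * (c + t)) t := by
      have h1 : HasDerivAt (fun t : ℝ => c + t) 1 t := (hasDerivAt_id t).const_add c
      simpa using (h1.pow 2).const_add s
    have := (Real.hasDerivAt_sqrt (ne_of_gt (hupos t ht))).comp t hu
    simpa [hrdef, div_eq_mul_inv, Function.comp_def] using this.congr_deriv (by
      field_simp)
  have hg : ∀ t : ℝ, |t| < t₀ →
      HasDerivAt (fun t : ℝ => C * Real.exp (-μ * r t))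
        (C * Real.exp (-μ * r t) * (-μ * ((c + t) / r t))) t := by
    intro t ht
    have h1 : HasDerivAt (fun t : ℝ => -μ * r t) (-μ * ((c + t) / r t)) t :=
      (hr t ht).const_mul (-μ)
    have h2 := (Real.hasDerivAt_exp (-μ * r t)).comp t h1
    simpa [mul_comm, mul_assoc, mul_left_comm] using h2.const_mul C
  -- the first derivative agrees with G near 0
  have hev : ∀ᶠ t : ℝ in nhds 0,
      deriv (fun t : ℝ => C * Real.exp (-μ * r t)) t
        = C * Real.exp (-μ * r t) * (-μ * ((c + t) / r t)) := by
    have hmem : Metric.ball (0:ℝ) t₀ ∈ nhds (0:ℝ) := Metric.ball_mem_nhds 0 ht₀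
    filter_upwards [hmem] with t ht
    have ht' : |t| < t₀ := by simpa [Real.dist_eq] using ht
    exact (hg t ht').deriv
  have h0 : |(0:ℝ)| < t₀ := by simpa using ht₀
  -- second derivative at 0
  have hr0 : r 0 = Real.sqrt (s + c^2) := by simp [hrdef]
  have hrne : r 0 ≠ 0 := ne_of_gt (hrpos 0 h0)
  have hB : HasDerivAt (fun t : ℝ => (c + t) / r t)
      ((1 * r 0 - (c + 0) * ((c + 0) / r 0)) / (r 0)^2) 0 := by
    have hnum : HasDerivAt (fun t : ℝ => c + t) 1 0 := (hasDerivAt_id 0).const_add c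
    exact hnum.div (hr 0 h0) hrne
  have hA : HasDerivAt (fun t : ℝ => C * Real.exp (-μ * r t))
      (C * Real.exp (-μ * r 0) * (-μ * ((c + 0) / r 0))) 0 := hg 0 h0
  have hG : HasDerivAt (fun t : ℝ => C * Real.exp (-μ * r t) * (-μ * ((c + t) / r t)))
      (C * Real.exp (-μ * r 0) * (-μ * ((c + 0) / r 0)) * (-μ * ((c + 0) / r 0))
        + C * Real.exp (-μ * r 0) *
            (-μ * ((1 * r 0 - (c + 0) * ((c + 0) / r 0)) / (r 0)^2))) 0 :=
    hA.mul (hB.const_mul (-μ))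
  have hfinal := (Filter.EventuallyEq.deriv_eq hev).trans hG.deriv
  rw [hfinal, hr0]
  have hrsq : Real.sqrt (s + c^2) ^ 2 = s + c^2 := Real.sq_sqrt hpos.le
  rw [hr0] at hrne
  set R := Real.sqrt (s + c^2) with hR
  have hR0 : 0 < R := lt_of_le_of_ne (Real.sqrt_nonneg _) (Ne.symm hrne)
  have hsE : s = R^2 - c^2 := by linarith [hrsq]
  rw [hsE]
  have : R^2 - c^2 + c^2 = R^2 := by ring
  rw [this]
  field_simp
  ring






lemma norm_coord (x : EuclideanSpace ℝ (Fin 2)) (t : ℝ) :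
    (‖x + t • EuclideanSpace.single 0 1‖ = Real.sqrt ((x 1)^2 + ((x 0) + t)^2))
    ∧ (‖x + t • EuclideanSpace.single 1 1‖ = Real.sqrt ((x 0)^2 + ((x 1) + t)^2)) := by
  constructor <;>
  · rw [EuclideanSpace.norm_eq, Fin.sum_univ_two]
    simp only [PiLp.add_apply, PiLp.smul_apply, EuclideanSpace.single_apply, smul_eq_mul]
    norm_num [Real.norm_eq_abs, sq_abs]
    try rw [add_comm]

lemma contDiffAt_barrier (μ C : ℝ) {x : EuclideanSpace ℝ (Fin 2)} (hx : x ≠ 0) :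
    ContDiffAt ℝ 2 (fun y : EuclideanSpace ℝ (Fin 2) => C * Real.exp (-μ * ‖y‖)) x := by
  exact contDiffAt_const.mul ((Real.contDiff_exp.contDiffAt).comp x
    (contDiffAt_const.mul (contDiffAt_norm ℝ hx)))

lemma lap_barrier (μ C : ℝ) (hμ : 0 ≤ μ) (hC : 0 ≤ C) (x : EuclideanSpace ℝ (Fin 2))
    (hx : 0 < ‖x‖) :
    lap (fun y => C * Real.exp (-μ * ‖y‖)) x ≤ μ^2 * (C * Real.exp (-μ * ‖x‖)) := by
  have hx0 : x ≠ 0 := by intro h; rw [h] at hx; simp at hx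
  have hcd := contDiffAt_barrier μ C hx0
  have hN : ‖x‖ = Real.sqrt ((x 0)^2 + (x 1)^2) := by
    rw [EuclideanSpace.norm_eq, Fin.sum_univ_two]
    norm_num [Real.norm_eq_abs, sq_abs]
  have hNsq : ‖x‖^2 = (x 0)^2 + (x 1)^2 := by
    rw [hN]; exact Real.sq_sqrt (by positivity)
  unfold lap
  rw [Fin.sum_univ_two, second_dir_deriv _ x _ hcd, second_dir_deriv _ x _ hcd]
  have e0 : (fun t : ℝ => C * Real.exp (-μ * ‖x + t • EuclideanSpace.single 0 1‖))
      = fun t : ℝ => C * Real.exp (-μ * Real.sqrt ((x 1)^2 + ((x 0) + t)^2)) := by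
    funext t; rw [(norm_coord x t).1]
  have e1 : (fun t : ℝ => C * Real.exp (-μ * ‖x + t • EuclideanSpace.single 1 1‖))
      = fun t : ℝ => C * Real.exp (-μ * Real.sqrt ((x 0)^2 + ((x 1) + t)^2)) := by
    funext t; rw [(norm_coord x t).2]
  have hpos2 : 0 < (x 0)^2 + (x 1)^2 := by rw [← hNsq]; positivity
  rw [e0, e1, barrier_oneD C μ _ _ (sq_nonneg _) (by linarith),
      barrier_oneD C μ _ _ (sq_nonneg _) (by linarith)]
  have h01 : (x 1)^2 + (x 0)^2 = ‖x‖^2 := by rw [hNsq]; ring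
  have h10 : (x 0)^2 + (x 1)^2 = ‖x‖^2 := by rw [hNsq]
  rw [h01, h10]
  have hsq : Real.sqrt (‖x‖^2) = ‖x‖ := Real.sqrt_sq hx.le
  rw [hsq]
  have hexp : 0 ≤ C * Real.exp (-μ * ‖x‖) := by positivity
  have key : μ^2 * (x 0)^2 / ‖x‖^2 + μ^2 * (x 1)^2 / ‖x‖^2 = μ^2 := by
    field_simp
    nlinarith [hNsq]
  have key2 : 0 ≤ μ * (x 1)^2 / ‖x‖^3 + μ * (x 0)^2 / ‖x‖^3 := by positivity
  nlinarith [hexp, key, key2, hNsq]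






lemma deriv_differentiableAt {a : ℝ → ℝ} (ha : ContDiffAt ℝ 2 a 0) :
    DifferentiableAt ℝ (deriv a) 0 ∧ HasDerivAt (deriv a) (deriv (deriv a) 0) 0 := by
  have h2 : ContDiffAt ℝ 1 (fun y => fderiv ℝ a y 1) 0 :=
    (ha.fderiv_right (m := 1) (by norm_num)).clm_apply contDiffAt_const
  have he : deriv a = fun y => fderiv ℝ a y 1 := by funext y; rw [fderiv_apply_one_eq_deriv]
  have hd : DifferentiableAt ℝ (deriv a) 0 := by rw [he]; exact h2.differentiableAt one_ne_zero
  exact ⟨hd, hd.hasDerivAt⟩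

lemma deriv2_sub {a b : ℝ → ℝ} (ha : ContDiffAt ℝ 2 a 0) (hb : ContDiffAt ℝ 2 b 0) :
    deriv (deriv (fun t => a t - b t)) 0 = deriv (deriv a) 0 - deriv (deriv b) 0 := by
  have hev : ∀ᶠ t : ℝ in nhds 0, deriv (fun t => a t - b t) t = deriv a t - deriv b t := by
    filter_upwards [ha.eventually (by simp), hb.eventually (by simp)] with t hat hbt
    exact deriv_fun_sub (hat.differentiableAt two_ne_zero) (hbt.differentiableAt two_ne_zero)
  rw [Filter.EventuallyEq.deriv_eq hev]
  exact deriv_fun_sub (deriv_differentiableAt ha).1 (deriv_differentiableAt hb).1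

lemma deriv2_add {a b : ℝ → ℝ} (ha : ContDiffAt ℝ 2 a 0) (hb : ContDiffAt ℝ 2 b 0) :
    deriv (deriv (fun t => a t + b t)) 0 = deriv (deriv a) 0 + deriv (deriv b) 0 := by
  have hev : ∀ᶠ t : ℝ in nhds 0, deriv (fun t => a t + b t) t = deriv a t + deriv b t := by
    filter_upwards [ha.eventually (by simp), hb.eventually (by simp)] with t hat hbt
    exact deriv_fun_add (hat.differentiableAt two_ne_zero) (hbt.differentiableAt two_ne_zero)
  rw [Filter.EventuallyEq.deriv_eq hev]
  exact deriv_fun_add (deriv_differentiableAt ha).1 (deriv_differentiableAt hb).1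

lemma deriv2_sq {a : ℝ → ℝ} (ha : ContDiffAt ℝ 2 a 0) :
    deriv (deriv (fun t => (a t)^2)) 0
      = 2*(deriv a 0)^2 + 2 * a 0 * deriv (deriv a) 0 := by
  have hev : ∀ᶠ t : ℝ in nhds 0, deriv (fun t => (a t)^2) t = 2 * a t * deriv a t := by
    filter_upwards [ha.eventually (by simp)] with t hat
    have hd : DifferentiableAt ℝ a t := hat.differentiableAt two_ne_zero
    have := hd.hasDerivAt
    have h2 : HasDerivAt (fun t => (a t)^2) (2 * a t ^ (2-1) * deriv a t) t := this.pow 2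
    simpa using h2.deriv
  rw [Filter.EventuallyEq.deriv_eq hev]
  have hda : HasDerivAt a (deriv a 0) 0 :=
    (ha.differentiableAt two_ne_zero).hasDerivAt
  have hdd : HasDerivAt (deriv a) (deriv (deriv a) 0) 0 := (deriv_differentiableAt ha).2
  have := ((hda.const_mul 2).fun_mul hdd).deriv
  rw [this]; ring

lemma lap_sub {f g : EuclideanSpace ℝ (Fin 2) → ℝ} {x : EuclideanSpace ℝ (Fin 2)}
    (hf : ContDiffAt ℝ 2 f x) (hg : ContDiffAt ℝ 2 g x) :
    lap (fun y => f y - g y) x = lap f x - lap g x := by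
  unfold lap
  rw [← Finset.sum_sub_distrib]
  apply Finset.sum_congr rfl
  intro i _
  rw [second_dir_deriv _ x _ (hf.sub hg), second_dir_deriv f x _ hf,
    second_dir_deriv g x _ hg]
  exact deriv2_sub (contDiffAt_line f x _ hf) (contDiffAt_line g x _ hg)

lemma lap_sq_add {f g : EuclideanSpace ℝ (Fin 2) → ℝ} {x : EuclideanSpace ℝ (Fin 2)}
    (hf : ContDiffAt ℝ 2 f x) (hg : ContDiffAt ℝ 2 g x) :
    2 * f x * lap f x + 2 * g x * lap g x
      ≤ lap (fun y => (f y)^2 + (g y)^2) x := by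
  unfold lap
  have hsum : ∀ i : Fin 2,
      fderiv ℝ (fun y => fderiv ℝ (fun y => (f y)^2 + (g y)^2) y (EuclideanSpace.single i 1))
        x (EuclideanSpace.single i 1)
      = (2*(deriv (fun t : ℝ => f (x + t • EuclideanSpace.single i 1)) 0)^2
          + 2 * f x * deriv (deriv (fun t : ℝ => f (x + t • EuclideanSpace.single i 1))) 0)
        + (2*(deriv (fun t : ℝ => g (x + t • EuclideanSpace.single i 1)) 0)^2
          + 2 * g x * deriv (deriv (fun t : ℝ => g (x + t • EuclideanSpace.single i 1))) 0) := by
    intro i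
    rw [second_dir_deriv (fun y => (f y)^2 + (g y)^2) x (EuclideanSpace.single i 1)
      ((hf.pow 2).add (hg.pow 2))]
    have e1 : (fun t : ℝ => (fun y => (f y)^2 + (g y)^2) (x + t • EuclideanSpace.single i 1))
        = fun t : ℝ => (f (x + t • EuclideanSpace.single i 1))^2
            + (g (x + t • EuclideanSpace.single i 1))^2 := rfl
    rw [e1, deriv2_add ((contDiffAt_line f x _ hf).pow 2) ((contDiffAt_line g x _ hg).pow 2),
      deriv2_sq (contDiffAt_line f x _ hf), deriv2_sq (contDiffAt_line g x _ hg)]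
    simp
  simp only [Fin.sum_univ_two]
  rw [hsum 0, hsum 1]
  rw [second_dir_deriv f x _ hf,
    second_dir_deriv f x _ hf, second_dir_deriv g x _ hg, second_dir_deriv g x _ hg]
  nlinarith [sq_nonneg (deriv (fun t : ℝ => f (x + t • EuclideanSpace.single 0 1)) 0),
    sq_nonneg (deriv (fun t : ℝ => f (x + t • EuclideanSpace.single 1 1)) 0),
    sq_nonneg (deriv (fun t : ℝ => g (x + t • EuclideanSpace.single 0 1)) 0),
    sq_nonneg (deriv (fun t : ℝ => g (x + t • EuclideanSpace.single 1 1)) 0)]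


lemma eventually_small {f : EuclideanSpace ℝ (Fin 2) → ℝ}
    (h : Tendsto f (cocompact (EuclideanSpace ℝ (Fin 2))) (nhds 0)) {δ : ℝ} (hδ : 0 < δ) :
    ∃ r : ℝ, ∀ x, r < ‖x‖ → |f x| < δ := by
  have hev : ∀ᶠ x in cocompact (EuclideanSpace ℝ (Fin 2)), |f x| < δ := by
    have := Metric.tendsto_nhds.mp h δ hδ
    simpa [Real.dist_eq] using this
  rw [Filter.eventually_iff, mem_cocompact] at hev
  obtain ⟨K, hK, hKs⟩ := hev
  obtain ⟨r, hr⟩ := hK.isBounded.subset_closedBall 0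
  refine ⟨r, fun x hx => ?_⟩
  apply hKs
  intro hxK
  have := hr hxK
  simp only [Metric.mem_closedBall, dist_zero_right] at this
  linarith

lemma exp_sub_bounds {t : ℝ} (ht : |t| ≤ 1) :
    0 ≤ Real.exp t - t - 1 ∧ Real.exp t - t - 1 ≤ t^2 := by
  constructor
  · linarith [Real.add_one_le_exp t]
  · have h := Real.exp_bound ht (n := 2) (by norm_num)
    have hsum : ∑ i ∈ Finset.range 2, t ^ i / (Nat.factorial i) = 1 + t := by
      simp [Finset.sum_range_succ]
    rw [hsum] at h
    norm_num [Nat.factorial] at h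
    rw [abs_le] at h
    nlinarith [sq_abs t, h.1, h.2]

lemma quad_bound (p q : ℝ) (hp : 0 < p) (hq : 0 < q) (a b : ℝ) :
    min 2 (2*q/p) * (a^2 + b^2)
      ≤ (p+q)/p * a^2 + (p-q)/p * (a*b) + (p-q)/p * (a*b) + (p+q)/p * b^2 := by
  have hRHS : (p+q)/p * a^2 + (p-q)/p * (a*b) + (p-q)/p * (a*b) + (p+q)/p * b^2
      = ((p+q)*(a^2+b^2) + 2*(p-q)*(a*b)) / p := by field_simp; ring
  rw [hRHS]
  rcases le_total p q with hpq | hpq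
  · have hmin : min 2 (2*q/p) = 2 := by
      apply min_eq_left
      rw [le_div_iff₀ hp]; linarith
    rw [hmin, le_div_iff₀ hp]
    nlinarith [mul_nonneg (sub_nonneg.2 hpq) (sq_nonneg (a - b))]
  · have hmin : min 2 (2*q/p) = 2*q/p := by
      apply min_eq_right
      rw [div_le_iff₀ hp]; linarith
    rw [hmin, div_mul_eq_mul_div, div_le_div_iff₀ hp hp]
    nlinarith [mul_nonneg (mul_nonneg hp.le (sub_nonneg.2 hpq)) (sq_nonneg (a + b))]

lemma err_bound {a k N δ κ c : ℝ} (ha : |a| ≤ δ) (hk : |k| ≤ κ) (hN0 : 0 ≤ N)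
    (hNc : N ≤ c) : -(δ * κ * c) ≤ a * (k * N) := by
  have h1 : |a * (k * N)| ≤ δ * κ * N := by
    rw [abs_mul, abs_mul, abs_of_nonneg hN0]
    have hδ0 : 0 ≤ δ := le_trans (abs_nonneg a) ha
    have hκ0 : 0 ≤ κ := le_trans (abs_nonneg k) hk
    have := mul_le_mul ha hk (abs_nonneg k) hδ0
    nlinarith [abs_nonneg a, abs_nonneg k]
  have h2 : δ * κ * N ≤ δ * κ * c := by
    have hδ0 : 0 ≤ δ := le_trans (abs_nonneg a) ha
    have hκ0 : 0 ≤ κ := le_trans (abs_nonneg k) hk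
    exact mul_le_mul_of_nonneg_left hNc (mul_nonneg hδ0 hκ0)
  nlinarith [neg_abs_le (a * (k * N))]

lemma barrier_tendsto (μ C : ℝ) (hμ : 0 < μ) :
    Tendsto (fun y : EuclideanSpace ℝ (Fin 2) => C * Real.exp (-μ * ‖y‖))
      (cocompact (EuclideanSpace ℝ (Fin 2))) (nhds 0) := by
  have h1 : Tendsto (fun y : EuclideanSpace ℝ (Fin 2) => μ * ‖y‖)
      (cocompact (EuclideanSpace ℝ (Fin 2))) atTop :=
    (tendsto_norm_cocompact_atTop).const_mul_atTop hμ
  have h2 := Real.tendsto_exp_neg_atTop_nhds_zero.comp h1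
  have h3 : (fun y : EuclideanSpace ℝ (Fin 2) => C * Real.exp (-μ * ‖y‖))
      = fun y => C * ((fun r => Real.exp (-r)) ∘ (fun y : EuclideanSpace ℝ (Fin 2) => μ * ‖y‖)) y := by
    funext y; simp [Function.comp, neg_mul]
  rw [h3]
  simpa using h2.const_mul C

end Helpers

/-- exponential decay estimate (2.46). Let `p, q > 0`, `p ≠ q`, `K`
the coupling matrix, `λ₀ = 4·min{2, 2q/p}`. If `v₁, v₂` are `C²` outside the disk of
radius `R₀`, tend to `0` at infinity, and solve
`Δvᵢ = 2k_{i1}v₁ + 2k_{i2}v₂ + 2k_{i1}(e^{v₁}−v₁−1) + 2k_{i2}(e^{v₂}−v₂−1)` there, then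
for every `ε ∈ (0,1)` there are `C_ε > 0` and `R ≥ R₀` with
`v₁² + v₂² ≤ C_ε·e^{−(1−ε)√λ₀|x|}` for `|x| ≥ R`. -/
theorem exponential_decay_of_solutions
    (p q : ℝ) (hp : 0 < p) (hq : 0 < q) (hpq : p ≠ q)
    (k11 k12 k21 k22 lam₀ : ℝ)
    (h11 : k11 = (p + q) / p) (h12 : k12 = (p - q) / p)
    (h21 : k21 = (p - q) / p) (h22 : k22 = (p + q) / p)
    (hlam : lam₀ = 4 * min 2 (2 * q / p))
    (R₀ : ℝ) (hR₀ : 0 < R₀)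
    (v₁ v₂ : EuclideanSpace ℝ (Fin 2) → ℝ)
    (hreg1 : ContDiffOn ℝ 2 v₁ {x | R₀ < ‖x‖})
    (hreg2 : ContDiffOn ℝ 2 v₂ {x | R₀ < ‖x‖})
    (hlim1 : Tendsto v₁ (cocompact (EuclideanSpace ℝ (Fin 2))) (nhds 0))
    (hlim2 : Tendsto v₂ (cocompact (EuclideanSpace ℝ (Fin 2))) (nhds 0))
    (hpde : ∀ x, R₀ < ‖x‖ →
      lap v₁ x = 2 * k11 * v₁ x + 2 * k12 * v₂ x
          + 2 * k11 * (Real.exp (v₁ x) - v₁ x - 1)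
          + 2 * k12 * (Real.exp (v₂ x) - v₂ x - 1) ∧
      lap v₂ x = 2 * k21 * v₁ x + 2 * k22 * v₂ x
          + 2 * k21 * (Real.exp (v₁ x) - v₁ x - 1)
          + 2 * k22 * (Real.exp (v₂ x) - v₂ x - 1)) :
    ∀ ε ∈ Set.Ioo (0 : ℝ) 1, ∃ C > (0 : ℝ), ∃ R ≥ R₀, ∀ x, R ≤ ‖x‖ →
      (v₁ x) ^ 2 + (v₂ x) ^ 2
        ≤ C * Real.exp (-(1 - ε) * Real.sqrt lam₀ * ‖x‖) := by
  subst h11 h12 h21 h22 hlam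
  intro ε hε
  obtain ⟨hε0, hε1⟩ := hε
  have hminpos : 0 < min 2 (2*q/p) := lt_min (by norm_num) (by positivity)
  have hlampos : 0 < 4 * min 2 (2*q/p) := by linarith
  set μ : ℝ := (1 - ε) * Real.sqrt (4 * min 2 (2*q/p)) with hμdef
  have hsqrtpos : 0 < Real.sqrt (4 * min 2 (2*q/p)) := Real.sqrt_pos.2 hlampos
  have hμpos : 0 < μ := mul_pos (by linarith) hsqrtpos
  have hμsq : μ^2 ≤ (1 - ε) * (4 * min 2 (2*q/p)) := by
    have h1 : μ^2 = (1-ε)^2 * (4 * min 2 (2*q/p)) := by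
      rw [hμdef, mul_pow, Real.sq_sqrt hlampos.le]
    nlinarith [hlampos]
  set κ : ℝ := (p + q) / p with hκdef
  have hκpos : 0 < κ := by positivity
  have hk11 : |(p+q)/p| ≤ κ := by rw [hκdef, abs_of_pos (by positivity)]
  have hk12 : |(p-q)/p| ≤ κ := by
    rw [hκdef, abs_div, abs_of_pos hp]
    gcongr
    exact abs_le.2 ⟨by linarith, by linarith⟩
  set δ : ℝ := min 1 (ε * (4 * min 2 (2*q/p)) / (8 * κ)) with hδdef
  have hδpos : 0 < δ := lt_min one_pos (by positivity)
  have hδ1 : δ ≤ 1 := min_le_left _ _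
  have hδ2 : 8 * κ * δ ≤ ε * (4 * min 2 (2*q/p)) := by
    have h1 : δ ≤ ε * (4 * min 2 (2*q/p)) / (8 * κ) := min_le_right _ _
    rw [le_div_iff₀ (by positivity)] at h1
    linarith
  obtain ⟨r₁, hr₁⟩ := eventually_small hlim1 hδpos
  obtain ⟨r₂, hr₂⟩ := eventually_small hlim2 hδpos
  set R : ℝ := max (R₀ + 1) (max r₁ r₂ + 1) with hRdef
  have hRR₀ : R₀ < R := lt_of_lt_of_le (by linarith) (le_max_left _ _)
  have hRpos : 0 < R := lt_trans hR₀ hRR₀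
  have hr₁R : r₁ < R :=
    lt_of_lt_of_le (by linarith [le_max_left r₁ r₂] : r₁ < max r₁ r₂ + 1) (le_max_right _ _)
  have hr₂R : r₂ < R :=
    lt_of_lt_of_le (by linarith [le_max_right r₁ r₂] : r₂ < max r₁ r₂ + 1) (le_max_right _ _)
  have hopen : IsOpen {x : EuclideanSpace ℝ (Fin 2) | R₀ < ‖x‖} :=
    isOpen_lt continuous_const continuous_norm
  have hcd1 : ∀ x : EuclideanSpace ℝ (Fin 2), R₀ < ‖x‖ → ContDiffAt ℝ 2 v₁ x :=
    fun x hx => hreg1.contDiffAt (hopen.mem_nhds hx)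
  have hcd2 : ∀ x : EuclideanSpace ℝ (Fin 2), R₀ < ‖x‖ → ContDiffAt ℝ 2 v₂ x :=
    fun x hx => hreg2.contDiffAt (hopen.mem_nhds hx)
  set u : EuclideanSpace ℝ (Fin 2) → ℝ := fun y => (v₁ y)^2 + (v₂ y)^2 with hudef
  have hcdu : ∀ x : EuclideanSpace ℝ (Fin 2), R₀ < ‖x‖ → ContDiffAt ℝ 2 u x :=
    fun x hx => ((hcd1 x hx).pow 2).add ((hcd2 x hx).pow 2)
  have hu0 : ∀ x, 0 ≤ u x := fun x => by rw [hudef]; positivity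
  -- the key differential inequality
  have hkey : ∀ x : EuclideanSpace ℝ (Fin 2), R ≤ ‖x‖ → μ^2 * u x ≤ lap u x := by
    intro x hx
    have hxR₀ : R₀ < ‖x‖ := lt_of_lt_of_le hRR₀ hx
    have hlow := lap_sq_add (hcd1 x hxR₀) (hcd2 x hxR₀)
    obtain ⟨hp1, hp2⟩ := hpde x hxR₀
    have ha : |v₁ x| ≤ δ := le_of_lt (hr₁ x (lt_of_lt_of_le hr₁R hx))
    have hb : |v₂ x| ≤ δ := le_of_lt (hr₂ x (lt_of_lt_of_le hr₂R hx))
    have ha1 : |v₁ x| ≤ 1 := le_trans ha hδ1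
    have hb1 : |v₂ x| ≤ 1 := le_trans hb hδ1
    obtain ⟨hN1a, hN1b⟩ := exp_sub_bounds ha1
    obtain ⟨hN2a, hN2b⟩ := exp_sub_bounds hb1
    have hquad := quad_bound p q hp hq (v₁ x) (v₂ x)
    have e1 := err_bound ha hk11 hN1a hN1b
    have e2 := err_bound ha hk12 hN2a hN2b
    have e3 := err_bound hb hk12 hN1a hN1b
    have e4 := err_bound hb hk11 hN2a hN2b
    have hs : 0 ≤ (v₁ x)^2 + (v₂ x)^2 := by positivity
    have hδκ : 8*κ*δ*((v₁ x)^2 + (v₂ x)^2)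
        ≤ ε*(4 * min 2 (2*q/p))*((v₁ x)^2 + (v₂ x)^2) :=
      mul_le_mul_of_nonneg_right hδ2 hs
    have hμs : μ^2*((v₁ x)^2 + (v₂ x)^2)
        ≤ (1-ε)*(4 * min 2 (2*q/p))*((v₁ x)^2 + (v₂ x)^2) :=
      mul_le_mul_of_nonneg_right hμsq hs
    have expand : 2 * v₁ x * lap v₁ x + 2 * v₂ x * lap v₂ x
        = 4*((p+q)/p * (v₁ x)^2 + (p-q)/p * (v₁ x * v₂ x) + (p-q)/p * (v₁ x * v₂ x)
              + (p+q)/p * (v₂ x)^2)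
          + 4*(v₁ x * ((p+q)/p * (Real.exp (v₁ x) - v₁ x - 1))
              + v₁ x * ((p-q)/p * (Real.exp (v₂ x) - v₂ x - 1))
              + v₂ x * ((p-q)/p * (Real.exp (v₁ x) - v₁ x - 1))
              + v₂ x * ((p+q)/p * (Real.exp (v₂ x) - v₂ x - 1))) := by
      rw [hp1, hp2]; ring
    have hLHS : μ^2*((v₁ x)^2 + (v₂ x)^2)
        ≤ 2 * v₁ x * lap v₁ x + 2 * v₂ x * lap v₂ x := by
      rw [expand]
      linarith [hquad, e1, e2, e3, e4, hδκ, hμs]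
    calc μ^2 * u x = μ^2*((v₁ x)^2 + (v₂ x)^2) := by rw [hudef]
      _ ≤ 2 * v₁ x * lap v₁ x + 2 * v₂ x * lap v₂ x := hLHS
      _ ≤ lap u x := by rw [hudef]; exact hlow
  -- boundary constant
  have hucont : ContinuousOn u {x : EuclideanSpace ℝ (Fin 2) | R₀ < ‖x‖} := by
    rw [hudef]
    exact ((hreg1.continuousOn).pow 2).add ((hreg2.continuousOn).pow 2)
  have hsne : (Metric.sphere (0:EuclideanSpace ℝ (Fin 2)) R).Nonempty :=
    NormedSpace.sphere_nonempty.2 hRpos.le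
  have hsubS : Metric.sphere (0:EuclideanSpace ℝ (Fin 2)) R
      ⊆ {x : EuclideanSpace ℝ (Fin 2) | R₀ < ‖x‖} := by
    intro y hy
    rw [mem_sphere_zero_iff_norm] at hy
    simpa [hy] using hRR₀
  obtain ⟨z, hzS, hzmax⟩ := (isCompact_sphere (0:EuclideanSpace ℝ (Fin 2)) R).exists_isMaxOn
    hsne (hucont.mono hsubS)
  set M : ℝ := u z with hMdef
  have hM0 : 0 ≤ M := hu0 z
  set Cc : ℝ := (M + 1) * Real.exp (μ * R) with hCdef
  have hCpos : 0 < Cc := by positivity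
  refine ⟨Cc, hCpos, R, hRR₀.le, ?_⟩
  set φ : EuclideanSpace ℝ (Fin 2) → ℝ := fun y => Cc * Real.exp (-μ * ‖y‖) with hφdef
  have hmain : ∀ x : EuclideanSpace ℝ (Fin 2), R ≤ ‖x‖ → u x ≤ φ x := by
    by_contra hcon
    push_neg at hcon
    obtain ⟨x₁, hx₁R, hx₁⟩ := hcon
    set h : EuclideanSpace ℝ (Fin 2) → ℝ := fun y => u y - φ y with hhdef
    have hx₁pos : 0 < h x₁ := by rw [hhdef]; simp only; linarith
    have htendu : Tendsto u (cocompact (EuclideanSpace ℝ (Fin 2))) (nhds 0) := by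
      have h2 := (hlim1.mul hlim1).add (hlim2.mul hlim2)
      simp only [mul_zero, add_zero] at h2
      have : u = fun x => v₁ x * v₁ x + v₂ x * v₂ x := by
        funext y; rw [hudef]; ring
      rw [this]; exact h2
    have htendh : Tendsto h (cocompact (EuclideanSpace ℝ (Fin 2))) (nhds 0) := by
      have := htendu.sub (barrier_tendsto μ Cc hμpos)
      simpa [hhdef, hφdef] using this
    obtain ⟨r₃, hr₃⟩ := eventually_small htendh hx₁pos
    set r₄ : ℝ := max r₃ ‖x₁‖ with hr₄def
    set A : Set (EuclideanSpace ℝ (Fin 2)) :=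
      Metric.closedBall 0 r₄ ∩ (Metric.ball 0 R)ᶜ with hAdef
    have hAco : IsCompact A :=
      (isCompact_closedBall _ _).inter_right Metric.isOpen_ball.isClosed_compl
    have hAnorm : ∀ y ∈ A, R ≤ ‖y‖ ∧ ‖y‖ ≤ r₄ := by
      intro y hy
      obtain ⟨hy1, hy2⟩ := hy
      rw [Metric.mem_closedBall, dist_zero_right] at hy1
      simp only [Set.mem_compl_iff, Metric.mem_ball, dist_zero_right, not_lt] at hy2
      exact ⟨hy2, hy1⟩
    have hx₁A : x₁ ∈ A := by
      constructor
      · rw [Metric.mem_closedBall, dist_zero_right]; exact le_max_right _ _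
      · simp only [Set.mem_compl_iff, Metric.mem_ball, dist_zero_right, not_lt]
        exact hx₁R
    have hAsub : A ⊆ {x : EuclideanSpace ℝ (Fin 2) | R₀ < ‖x‖} := by
      intro y hy
      exact lt_of_lt_of_le hRR₀ (hAnorm y hy).1
    have hφcont : Continuous φ := by
      rw [hφdef]
      exact continuous_const.mul (Real.continuous_exp.comp (continuous_const.mul continuous_norm))
    have hhcont : ContinuousOn h A := by
      rw [hhdef]
      exact (hucont.mono hAsub).sub hφcont.continuousOn
    obtain ⟨x₀, hx₀A, hx₀max⟩ := hAco.exists_isMaxOn ⟨x₁, hx₁A⟩ hhcont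
    have hx₀ge : R ≤ ‖x₀‖ := (hAnorm x₀ hx₀A).1
    have hhx₀ : 0 < h x₀ := lt_of_lt_of_le hx₁pos (hx₀max hx₁A)
    have hbd : ∀ y : EuclideanSpace ℝ (Fin 2), ‖y‖ = R → h y < 0 := by
      intro y hy
      have h1 : u y ≤ M := hzmax (mem_sphere_zero_iff_norm.2 hy)
      have h2 : φ y = M + 1 := by
        rw [hφdef]
        simp only
        rw [hy, hCdef, mul_assoc, ← Real.exp_add]
        ring_nf
        rw [Real.exp_zero]; ring
      rw [hhdef]; simp only [h2]; linarith
    have hx₀gt : R < ‖x₀‖ := by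
      rcases lt_or_eq_of_le hx₀ge with hlt | heq
      · exact hlt
      · exact absurd hhx₀ (not_lt.2 (hbd x₀ heq.symm).le)
    have hglob : ∀ y : EuclideanSpace ℝ (Fin 2), R < ‖y‖ → h y ≤ h x₀ := by
      intro y hy
      rcases le_or_gt ‖y‖ r₄ with h4 | h4
      · apply hx₀max
        constructor
        · rw [Metric.mem_closedBall, dist_zero_right]; exact h4
        · simp only [Set.mem_compl_iff, Metric.mem_ball, dist_zero_right, not_lt]
          exact hy.le
      · have hyr₃ : r₃ < ‖y‖ := lt_of_le_of_lt (le_max_left _ _) h4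
        have := hr₃ y hyr₃
        have h5 : h x₁ ≤ h x₀ := hx₀max hx₁A
        have h6 := le_abs_self (h y)
        simp only [abs_lt] at this
        linarith [this.2]
    have hloc : IsLocalMax h x₀ := by
      have hmem : {y : EuclideanSpace ℝ (Fin 2) | R < ‖y‖} ∈ nhds x₀ :=
        (isOpen_lt continuous_const continuous_norm).mem_nhds hx₀gt
      exact Filter.eventually_of_mem hmem hglob
    have hx₀R₀ : R₀ < ‖x₀‖ := lt_trans hRR₀ hx₀gt
    have hx₀norm : 0 < ‖x₀‖ := lt_trans hRpos hx₀gt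
    have hx₀ne : x₀ ≠ 0 := by
      intro h0
      rw [h0, norm_zero] at hx₀norm
      exact lt_irrefl 0 hx₀norm
    have hcdu₀ := hcdu x₀ hx₀R₀
    have hcdφ : ContDiffAt ℝ 2 φ x₀ := by
      rw [hφdef]; exact contDiffAt_barrier μ Cc hx₀ne
    have hcdh : ContDiffAt ℝ 2 h x₀ := by
      rw [hhdef]; exact hcdu₀.sub hcdφ
    have hlapmax : lap h x₀ ≤ 0 := lap_nonpos_of_isLocalMax hcdh hloc
    have hlapsub : lap h x₀ = lap u x₀ - lap φ x₀ := by
      rw [hhdef]; exact lap_sub hcdu₀ hcdφ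
    have h1 := hkey x₀ hx₀gt.le
    have h2 : lap φ x₀ ≤ μ^2 * φ x₀ := by
      rw [hφdef]
      exact lap_barrier μ Cc hμpos.le hCpos.le x₀ hx₀norm
    have hux₀ : 0 < u x₀ - φ x₀ := by
      have := hhx₀; rw [hhdef] at this; exact this
    have h3 : 0 < μ^2 * (u x₀ - φ x₀) := mul_pos (pow_pos hμpos 2) hux₀
    linarith [hlapmax, hlapsub, h1, h2, h3]
  intro x hx
  have hm := hmain x hx
  have heq : φ x = Cc * Real.exp (-(1-ε) * Real.sqrt (4 * min 2 (2*q/p)) * ‖x‖) := by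
    rw [hφdef]
    simp only
    congr 1
    rw [hμdef]
    ring_nf
  rw [← heq]
  calc (v₁ x)^2 + (v₂ x)^2 = u x := by rw [hudef]
    _ ≤ φ x := hm
end
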